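/- arXiv:2510.10967 — 4 statements merged into one kernel-verified Lean document; each statement's English description precedes it below -/
import Mathlib

section
/- For every positive integer k and every affine subspace A of 𝔽₂^{2k} of dimension d = dim A, the cardinality |A ∩ S_k| satisfies: |A ∩ S_k| ≤ 2^d if d < k; |A ∩ S_k| ≤ 2^{d-1} + 2^{k-2} if k ≤ d < 2k-1; |A ∩ S_k| ≤ 2^{2k-2} if d = 2k-1; and |A ∩ S_k| ≤ 2^{2k-1} - 2^{k-1} if d = 2k. -/
/-- The quadratic form `q_k(x) = ∑_{i=1}^k x_i · x_{k+i}` on `𝔽₂^{2k}`. -/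
def qForm (k : ℕ) (x : Fin (2 * k) → ZMod 2) : ZMod 2 :=
  ∑ i : Fin k, x ⟨i.1, by have := i.2; omega⟩ * x ⟨k + i.1, by have := i.2; omega⟩

/-- `S_k = {x ∈ 𝔽₂^{2k} : q_k(x) = 1}`. -/
def Sset (k : ℕ) : Set (Fin (2 * k) → ZMod 2) := {x | qForm k x = 1}

/-- `A` is an affine subspace of dimension `d`: a translate `a + W` of a linear
subspace `W` with `dim W = d`. -/
def IsAffineOfDim {V : Type*} [AddCommGroup V] [Module (ZMod 2) V]
    (A : Set V) (d : ℕ) : Prop :=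
  ∃ (a : V) (W : Submodule (ZMod 2) V),
    Module.finrank (ZMod 2) W = d ∧ A = (a + ·) '' (W : Set V)

namespace QAux

open Finset

attribute [local instance] Classical.propDecidable

abbrev V (k : ℕ) := Fin (2 * k) → ZMod 2

def chi (t : ZMod 2) : ℤ := if t = 0 then 1 else -1

lemma chi_add (a b : ZMod 2) : chi (a + b) = chi a * chi b := by revert a b; decide

lemma chi_cases (t : ZMod 2) : chi t = 1 ∨ chi t = -1 := by revert t; decide

lemma chi_eq (t : ZMod 2) : chi t = 1 - 2 * (if t = 1 then 1 else 0) := by revert t; decide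

lemma ne_zero_eq_one {t : ZMod 2} (h : t ≠ 0) : t = 1 := by revert h; revert t; decide

lemma add_self_zmod2 (a : ZMod 2) : a + a = 0 := by revert a; decide

def lo (k : ℕ) (i : Fin k) : Fin (2 * k) := ⟨i.1, by have := i.2; omega⟩
def hi (k : ℕ) (i : Fin k) : Fin (2 * k) := ⟨k + i.1, by have := i.2; omega⟩

lemma qForm_eq (k : ℕ) (x : V k) : qForm k x = ∑ i : Fin k, x (lo k i) * x (hi k i) := rfl

def Bf (k : ℕ) (x y : V k) : ZMod 2 :=
  ∑ i : Fin k, (x (lo k i) * y (hi k i) + y (lo k i) * x (hi k i))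

variable {k : ℕ}

lemma q_add (x y : V k) : qForm k (x + y) = qForm k x + qForm k y + Bf k x y := by
  simp only [qForm_eq, Bf, Pi.add_apply, ← Finset.sum_add_distrib]
  exact Finset.sum_congr rfl fun i _ => by ring

lemma q_zero : qForm k 0 = 0 := by simp [qForm_eq]

lemma Bf_comm (x y : V k) : Bf k x y = Bf k y x :=
  Finset.sum_congr rfl fun i _ => by ring

lemma Bf_add_left (x x' y : V k) : Bf k (x + x') y = Bf k x y + Bf k x' y := by
  simp only [Bf, Pi.add_apply, ← Finset.sum_add_distrib]
  exact Finset.sum_congr rfl fun i _ => by ring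

lemma Bf_add_right (x y y' : V k) : Bf k x (y + y') = Bf k x y + Bf k x y' := by
  rw [Bf_comm, Bf_add_left, Bf_comm y x, Bf_comm y' x]

lemma Bf_zero_left (y : V k) : Bf k 0 y = 0 := by simp [Bf]

lemma Bf_zero_right (x : V k) : Bf k x 0 = 0 := by rw [Bf_comm]; exact Bf_zero_left x

lemma Bf_smul_right (c : ZMod 2) (x y : V k) : Bf k x (c • y) = c * Bf k x y := by
  simp only [Bf, Pi.smul_apply, smul_eq_mul, Finset.mul_sum]
  exact Finset.sum_congr rfl fun i _ => by ring

lemma Bf_single (j : Fin (2 * k)) (z : V k) : ∃ x, Bf k x z = z j := by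
  by_cases h : j.1 < k
  · refine ⟨Pi.single (hi k ⟨j.1, h⟩) 1, ?_⟩
    rw [Bf, Finset.sum_eq_single ⟨j.1, h⟩]
    · have hne : lo k ⟨j.1, h⟩ ≠ hi k ⟨j.1, h⟩ := by
        intro hc; have := congrArg Fin.val hc; simp [lo, hi] at this; omega
      have e1 : lo k ⟨j.1, h⟩ = j := by ext; rfl
      simp [Pi.single_apply, hne, e1]
      intro hc; have := congrArg Fin.val hc; simp [lo, hi] at this; omega
    · intro i _ hi'
      have h1 : lo k i ≠ hi k ⟨j.1, h⟩ := by
        intro hc; have := congrArg Fin.val hc; simp [lo, hi] at this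
        have := i.2; omega
      have h2 : hi k i ≠ hi k ⟨j.1, h⟩ := by
        intro hc; have := congrArg Fin.val hc; simp [lo, hi] at this
        exact hi' (by ext; exact this)
      simp [Pi.single_apply, h1, h2]
    · simp
  · have h2 : j.1 - k < k := by have := j.2; omega
    refine ⟨Pi.single (lo k ⟨j.1 - k, h2⟩) 1, ?_⟩
    rw [Bf, Finset.sum_eq_single ⟨j.1 - k, h2⟩]
    · have hne : hi k ⟨j.1 - k, h2⟩ ≠ lo k ⟨j.1 - k, h2⟩ := by
        intro hc; have := congrArg Fin.val hc; simp [lo, hi] at this; omega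
      have e1 : hi k ⟨j.1 - k, h2⟩ = j := by ext; simp [hi]; omega
      simp [Pi.single_apply, hne, e1]
      intro hc; have := congrArg Fin.val hc; simp [lo, hi] at this; omega
    · intro i _ hi'
      have h1 : lo k i ≠ lo k ⟨j.1 - k, h2⟩ := by
        intro hc; have := congrArg Fin.val hc; simp [lo, hi] at this
        exact hi' (by ext; exact this)
      have h3 : hi k i ≠ lo k ⟨j.1 - k, h2⟩ := by
        intro hc; have := congrArg Fin.val hc; simp [lo, hi] at this
        omega
      simp [Pi.single_apply, h1, h3]
    · simp

lemma Bf_nondeg {z : V k} (h : ∀ x, Bf k x z = 0) : z = 0 := by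
  funext j
  obtain ⟨x, hx⟩ := Bf_single j z
  rw [← hx, h x]; rfl

lemma sum_chi_hom {G : Type*} [AddCommGroup G] [Fintype G] (f : G → ZMod 2)
    (hf : ∀ a b, f (a + b) = f a + f b) :
    ∑ x : G, chi (f x) = if ∀ x, f x = 0 then (Fintype.card G : ℤ) else 0 := by
  split_ifs with h
  · have e : ∀ x ∈ (univ : Finset G), chi (f x) = 1 := fun x _ => by
      rw [h x]; simp [chi]
    rw [Finset.sum_congr rfl e]
    simp [Finset.card_univ]
  · push_neg at h
    obtain ⟨x₀, hx₀⟩ := h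
    have h1 : f x₀ = 1 := ne_zero_eq_one hx₀
    have key : ∑ x : G, chi (f x) = ∑ x : G, -chi (f x) := by
      nth_rewrite 1 [← Fintype.sum_equiv (Equiv.addRight x₀)
        (fun x => chi (f (x + x₀))) (fun x => chi (f x)) (fun x => rfl)]
      refine Finset.sum_congr rfl fun x _ => ?_
      rw [hf, h1, chi_add]
      simp [chi]
    simp only [Finset.sum_neg_distrib] at key
    omega

noncomputable def cardI (U : Submodule (ZMod 2) (V k)) : ℤ :=
  ∑ x : V k, if x ∈ U then 1 else 0

lemma sum_chi_ind (U : Submodule (ZMod 2) (V k)) (f : V k → ZMod 2)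
    (hf : ∀ a ∈ U, ∀ b ∈ U, f (a + b) = f a + f b) :
    ∑ x : V k, (if x ∈ U then chi (f x) else 0)
      = if ∀ x ∈ U, f x = 0 then cardI U else 0 := by
  split_ifs with h
  · rw [cardI]
    refine Finset.sum_congr rfl fun x _ => ?_
    split_ifs with hx
    · rw [h x hx]; simp [chi]
    · rfl
  · push_neg at h
    obtain ⟨x₀, hx₀U, hx₀⟩ := h
    have h1 : f x₀ = 1 := ne_zero_eq_one hx₀
    have key : ∑ x : V k, (if x ∈ U then chi (f x) else 0)
        = ∑ x : V k, -(if x ∈ U then chi (f x) else 0) := by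
      nth_rewrite 1 [← Fintype.sum_equiv (Equiv.addRight x₀)
        (fun x => if x + x₀ ∈ U then chi (f (x + x₀)) else 0)
        (fun x => if x ∈ U then chi (f x) else 0) (fun x => rfl)]
      refine Finset.sum_congr rfl fun x _ => ?_
      by_cases hx : x ∈ U
      · rw [if_pos hx, if_pos (U.add_mem hx hx₀U), hf x hx x₀ hx₀U, h1, chi_add]
        simp [chi]
      · rw [if_neg hx, if_neg, neg_zero]
        intro hc
        exact hx (by simpa using U.sub_mem hc hx₀U)
    simp only [Finset.sum_neg_distrib] at key
    omega

lemma cardI_eq (U : Submodule (ZMod 2) (V k)) :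
    cardI U = 2 ^ (Module.finrank (ZMod 2) U) := by
  have h1 : cardI U = ((univ.filter (fun x => x ∈ U)).card : ℤ) := by
    rw [cardI]; simp [Finset.sum_boole]
  rw [h1, ← Fintype.card_subtype]
  have h2 := Module.card_eq_pow_finrank (K := ZMod 2) (V := U)
  rw [ZMod.card] at h2
  exact_mod_cast congrArg (Nat.cast : ℕ → ℤ) h2

def pairEquiv (k : ℕ) : ((Fin k → ZMod 2) × (Fin k → ZMod 2)) ≃ (V k) where
  toFun p := fun j => if h : j.1 < k then p.1 ⟨j.1, h⟩ else p.2 ⟨j.1 - k, by have := j.2; omega⟩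
  invFun x := (fun i => x ⟨i.1, by have := i.2; omega⟩, fun i => x ⟨k + i.1, by have := i.2; omega⟩)
  left_inv p := by
    ext i
    · simp only []
      rw [dif_pos i.2]
    · simp only []
      rw [dif_neg (by omega)]
      exact congrArg p.2 (Fin.ext (by simp))
  right_inv x := by
    funext j
    by_cases h : j.1 < k
    · simp only [dif_pos h]
    · simp only [dif_neg h]
      exact congrArg x (Fin.ext (by simp only [Fin.val_mk]; omega))

lemma qForm_pairEquiv (p : (Fin k → ZMod 2) × (Fin k → ZMod 2)) :
    qForm k (pairEquiv k p) = ∑ i : Fin k, p.1 i * p.2 i := by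
  rw [qForm]
  refine Finset.sum_congr rfl fun i _ => ?_
  have e1 : pairEquiv k p ⟨i.1, by have := i.2; omega⟩ = p.1 i := by
    show dite _ _ _ = _
    rw [dif_pos i.2]
  have e2 : pairEquiv k p ⟨k + i.1, by have := i.2; omega⟩ = p.2 i := by
    show dite _ _ _ = _
    rw [dif_neg (by simp only [Fin.val_mk]; omega)]
    exact congrArg p.2 (Fin.ext (by simp))
  rw [e1, e2]

lemma gauss : ∑ x : V k, chi (qForm k x) = 2 ^ k := by
  rw [← Fintype.sum_equiv (pairEquiv k)
    (fun p => chi (qForm k (pairEquiv k p))) (fun x => chi (qForm k x)) (fun p => rfl)]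
  have e : ∀ p : (Fin k → ZMod 2) × (Fin k → ZMod 2),
      chi (qForm k (pairEquiv k p)) = chi (∑ i : Fin k, p.1 i * p.2 i) :=
    fun p => by rw [qForm_pairEquiv]
  rw [Finset.sum_congr rfl fun p _ => e p, Fintype.sum_prod_type]
  have inner : ∀ u : Fin k → ZMod 2,
      (∑ v : Fin k → ZMod 2, chi (∑ i : Fin k, u i * v i))
        = if u = 0 then ((2 : ℤ) ^ k) else 0 := by
    intro u
    have hadd : ∀ a b : Fin k → ZMod 2, (∑ i : Fin k, u i * (a + b) i)
        = (∑ i : Fin k, u i * a i) + (∑ i : Fin k, u i * b i) := by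
      intro a b
      simp only [Pi.add_apply, mul_add, Finset.sum_add_distrib]
    have hiff : (∀ v : Fin k → ZMod 2, (∑ i : Fin k, u i * v i) = 0) ↔ u = 0 := by
      constructor
      · intro hc
        funext i
        have h0 := hc (Pi.single i 1)
        rw [Finset.sum_eq_single i] at h0
        · simpa using h0
        · intro b _ hb; simp [Pi.single_apply, hb]
        · simp
      · intro hu v; rw [hu]; simp
    rw [sum_chi_hom (fun v : Fin k → ZMod 2 => ∑ i : Fin k, u i * v i) hadd,
      if_congr hiff rfl rfl]
    have hcard : (Fintype.card (Fin k → ZMod 2) : ℤ) = 2 ^ k := by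
      simp [Fintype.card_fun]
    rw [hcard]
  rw [Finset.sum_congr rfl fun u (_ : u ∈ univ) => inner u]
  simp

lemma even_of_sq_eq_pow {T : ℤ} {n : ℕ} (h : T ^ 2 = 2 ^ n) : Even n := by
  have h1 : ((T.natAbs : ℤ)) ^ 2 = 2 ^ n := by rw [Int.natAbs_sq]; exact h
  have h2 : T.natAbs ^ 2 = 2 ^ n := by exact_mod_cast h1
  have h3 := congrArg (fun m => m.factorization 2) h2
  simp only [Nat.factorization_pow, Nat.Prime.factorization_pow Nat.prime_two,
    Finsupp.smul_apply, Finsupp.single_eq_same, smul_eq_mul] at h3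
  exact ⟨T.natAbs.factorization 2, by omega⟩

def perp (W : Submodule (ZMod 2) (V k)) : Submodule (ZMod 2) (V k) where
  carrier := {z | ∀ x ∈ W, Bf k x z = 0}
  add_mem' := fun {a b} ha hb x hx => by rw [Bf_add_right, ha x hx, hb x hx, add_zero]
  zero_mem' := fun x _ => Bf_zero_right x
  smul_mem' := fun c {z} hz x hx => by rw [Bf_smul_right, hz x hx, mul_zero]

lemma mem_perp {W : Submodule (ZMod 2) (V k)} {z : V k} :
    z ∈ perp W ↔ ∀ x ∈ W, Bf k x z = 0 := Iff.rfl

noncomputable def Tc (W : Submodule (ZMod 2) (V k)) (c : V k) : ℤ :=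
  ∑ x : V k, if x ∈ W then chi (qForm k (c + x)) else 0

lemma card_V : (Fintype.card (V k) : ℤ) = 2 ^ (2 * k) := by
  rw [Fintype.card_fun]
  push_cast
  simp

lemma sum_chi_B (z : V k) :
    ∑ x : V k, chi (Bf k x z) = if z = 0 then (2 : ℤ) ^ (2 * k) else 0 := by
  rw [sum_chi_hom (fun x => Bf k x z) (fun a b => Bf_add_left a b z)]
  have hiff : (∀ x, Bf k x z = 0) ↔ z = 0 :=
    ⟨Bf_nondeg, fun h x => by rw [h]; exact Bf_zero_right x⟩
  rw [if_congr hiff rfl rfl, card_V]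

lemma two_aux (a b : ZMod 2) : a + (a + b) = b := by revert a b; decide

lemma four_aux (a b c d : ZMod 2) : a + (a + b + (c + d)) = b + c + d := by revert a b c d; decide

lemma chi_zero : chi 0 = 1 := by decide

lemma T_sq_eq (W : Submodule (ZMod 2) (V k)) (c : V k) :
    (Tc W c) ^ 2 = cardI W *
      ∑ z : V k, (if z ∈ W ⊓ perp W then chi (qForm k z + Bf k c z) else 0) := by
  have step1 : (Tc W c) ^ 2 = ∑ x : V k, ∑ z : V k,
      (if x ∈ W then (if z ∈ W then
        chi (qForm k z + Bf k c z + Bf k x z) else 0) else 0) := by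
    rw [pow_two, Tc, Finset.sum_mul]
    refine Finset.sum_congr rfl fun x _ => ?_
    by_cases hx : x ∈ W
    · simp only [hx, if_true]
      have hT : (∑ y : V k, if y ∈ W then chi (qForm k (c + y)) else 0)
          = ∑ z : V k, (if x + z ∈ W then chi (qForm k (c + (x + z))) else 0) := by
        exact (Fintype.sum_equiv (Equiv.addLeft x)
          (fun z => if x + z ∈ W then chi (qForm k (c + (x + z))) else 0)
          (fun y => if y ∈ W then chi (qForm k (c + y)) else 0) (fun z => rfl)).symm
      rw [hT, Finset.mul_sum]
      refine Finset.sum_congr rfl fun z _ => ?_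
      by_cases hz : z ∈ W
      · rw [if_pos (W.add_mem hx hz), if_pos hz, ← chi_add]
        congr 1
        have h1 : c + (x + z) = (c + x) + z := by ring
        rw [h1, q_add (c + x) z, Bf_add_left c x z]
        exact four_aux _ _ _ _
      · rw [if_neg hz, if_neg, mul_zero]
        intro hc
        exact hz (by simpa using W.sub_mem hc hx)
    · simp [hx]
  rw [step1, Finset.sum_comm]
  have step2 : ∀ z : V k, (∑ x : V k, if x ∈ W then
        (if z ∈ W then chi (qForm k z + Bf k c z + Bf k x z) else 0) else 0)
      = if z ∈ W ⊓ perp W then cardI W * chi (qForm k z + Bf k c z) else 0 := by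
    intro z
    by_cases hz : z ∈ W
    · have e1 : ∀ x : V k, (if x ∈ W then
          (if z ∈ W then chi (qForm k z + Bf k c z + Bf k x z) else 0) else 0)
          = chi (qForm k z + Bf k c z) * (if x ∈ W then chi (Bf k x z) else 0) := by
        intro x
        by_cases hx : x ∈ W
        · rw [if_pos hx, if_pos hz, if_pos hx, ← chi_add]
        · simp [hx]
      rw [Finset.sum_congr rfl fun x _ => e1 x, ← Finset.mul_sum,
        sum_chi_ind W (fun x => Bf k x z) (fun a _ b _ => Bf_add_left a b z)]
      by_cases hp : z ∈ perp W
      · rw [if_pos (mem_perp.mp hp), if_pos (Submodule.mem_inf.mpr ⟨hz, hp⟩)]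
        ring
      · rw [if_neg, if_neg, mul_zero]
        · intro hc; exact hp (Submodule.mem_inf.mp hc).2
        · intro hc; exact hp (mem_perp.mpr hc)
    · have e0 : ∀ x : V k, (if x ∈ W then
          (if z ∈ W then chi (qForm k z + Bf k c z + Bf k x z) else 0) else 0) = 0 := by
        intro x; by_cases hx : x ∈ W <;> simp [hx, hz]
      rw [Finset.sum_congr rfl fun x _ => e0 x, if_neg]
      · simp
      · intro hc; exact hz (Submodule.mem_inf.mp hc).1
  rw [Finset.sum_congr rfl fun z _ => step2 z, Finset.mul_sum]
  refine Finset.sum_congr rfl fun z _ => ?_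
  by_cases hz : z ∈ W ⊓ perp W
  · simp [hz]
  · simp [hz]

lemma T_sq (W : Submodule (ZMod 2) (V k)) (c : V k) :
    Tc W c = 0 ∨ (Tc W c) ^ 2 = cardI W * cardI (W ⊓ perp W) := by
  have hadd : ∀ a ∈ W ⊓ perp W, ∀ b ∈ W ⊓ perp W,
      qForm k (a + b) + Bf k c (a + b) = (qForm k a + Bf k c a) + (qForm k b + Bf k c b) := by
    intro a ha b hb
    rw [q_add, Bf_add_right]
    have hab : Bf k a b = 0 := (Submodule.mem_inf.mp hb).2 a (Submodule.mem_inf.mp ha).1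
    rw [hab]; ring
  have h := T_sq_eq W c
  rw [sum_chi_ind (W ⊓ perp W) (fun z => qForm k z + Bf k c z) hadd] at h
  by_cases hc : ∀ x ∈ W ⊓ perp W, qForm k x + Bf k c x = 0
  · right; rw [h, if_pos hc]
  · left
    rw [if_neg hc, mul_zero] at h
    exact sq_eq_zero_iff.mp h

lemma card_mul_card_perp (W : Submodule (ZMod 2) (V k)) :
    cardI W * cardI (perp W) = 2 ^ (2 * k) := by
  have h1 : ∑ z : V k, ∑ x : V k, (if x ∈ W then chi (Bf k x z) else 0)
      = cardI W * cardI (perp W) := by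
    have e : ∀ z : V k, (∑ x : V k, if x ∈ W then chi (Bf k x z) else 0)
        = if z ∈ perp W then cardI W else 0 := by
      intro z
      rw [sum_chi_ind W (fun x => Bf k x z) (fun a _ b _ => Bf_add_left a b z)]
      exact if_congr mem_perp.symm rfl rfl
    have e' : ∀ z : V k, (if z ∈ perp W then cardI W else 0)
        = cardI W * (if z ∈ perp W then 1 else 0) := by
      intro z; by_cases hz : z ∈ perp W <;> simp [hz]
    rw [Finset.sum_congr rfl fun z _ => e z, Finset.sum_congr rfl fun z _ => e' z,
      ← Finset.mul_sum]
    rfl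
  have h2 : ∑ z : V k, ∑ x : V k, (if x ∈ W then chi (Bf k x z) else 0)
      = 2 ^ (2 * k) := by
    rw [Finset.sum_comm]
    have e : ∀ x : V k, (∑ z : V k, if x ∈ W then chi (Bf k x z) else 0)
        = if x = 0 then (2 : ℤ) ^ (2 * k) else 0 := by
      intro x
      by_cases hx : x ∈ W
      · simp only [if_pos hx]
        have : ∀ z : V k, chi (Bf k x z) = chi (Bf k z x) := fun z => by rw [Bf_comm]
        rw [Finset.sum_congr rfl fun z _ => this z, sum_chi_B]
      · simp only [if_neg hx]
        rw [if_neg, Finset.sum_const_zero]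
        intro hc; exact hx (hc ▸ W.zero_mem)
    rw [Finset.sum_congr rfl fun x _ => e x, Finset.sum_ite_eq' univ 0 (fun _ => (2:ℤ) ^ (2*k))]
    simp
  rw [← h1, h2]

lemma sum_T (W : Submodule (ZMod 2) (V k)) :
    ∑ x : V k, Tc W x = cardI W * 2 ^ k := by
  simp only [Tc]
  rw [Finset.sum_comm]
  have e : ∀ w : V k, (∑ x : V k, if w ∈ W then chi (qForm k (x + w)) else 0)
      = if w ∈ W then (2 : ℤ) ^ k else 0 := by
    intro w
    by_cases hw : w ∈ W
    · simp only [if_pos hw]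
      rw [Fintype.sum_equiv (Equiv.addRight w)
        (fun x => chi (qForm k (x + w))) (fun y => chi (qForm k y)) (fun x => rfl)]
      exact gauss
    · simp [hw]
  have e' : ∀ w : V k, (if w ∈ W then (2:ℤ) ^ k else 0)
      = (if w ∈ W then 1 else 0) * 2 ^ k := by
    intro w; by_cases hw : w ∈ W <;> simp [hw]
  rw [Finset.sum_congr rfl fun w _ => e w, Finset.sum_congr rfl fun w _ => e' w,
    ← Finset.sum_mul]
  rfl

lemma sum_T_sq (W : Submodule (ZMod 2) (V k)) :
    ∑ x : V k, (Tc W x) ^ 2 = cardI W * 2 ^ (2 * k) := by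
  have e : ∀ x : V k, (Tc W x) ^ 2 = cardI W *
      ∑ z : V k, (if z ∈ W ⊓ perp W then chi (qForm k z + Bf k x z) else 0) :=
    fun x => T_sq_eq W x
  rw [Finset.sum_congr rfl fun x _ => e x, ← Finset.mul_sum, Finset.sum_comm]
  congr 1
  have e2 : ∀ z : V k, (∑ x : V k, if z ∈ W ⊓ perp W then chi (qForm k z + Bf k x z) else 0)
      = if z = 0 then (2 : ℤ) ^ (2 * k) else 0 := by
    intro z
    by_cases hz : z ∈ W ⊓ perp W
    · simp only [if_pos hz]
      have e3 : ∀ x : V k, chi (qForm k z + Bf k x z) = chi (qForm k z) * chi (Bf k x z) :=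
        fun x => chi_add _ _
      rw [Finset.sum_congr rfl fun x _ => e3 x, ← Finset.mul_sum, sum_chi_B]
      by_cases h0 : z = 0
      · rw [if_pos h0, h0, q_zero, chi_zero, one_mul]
      · rw [if_neg h0, mul_zero]
    · simp only [if_neg hz, Finset.sum_const_zero]
      rw [if_neg]
      intro hc; exact hz (hc ▸ (W ⊓ perp W).zero_mem)
  rw [Finset.sum_congr rfl fun z _ => e2 z, Finset.sum_ite_eq' univ 0 (fun _ => (2:ℤ) ^ (2*k))]
  simp

lemma T_nonneg (W : Submodule (ZMod 2) (V k)) (c : V k)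
    (hK : cardI W * cardI (W ⊓ perp W) = 2 ^ (2 * k)) : 0 ≤ Tc W c := by
  have hdisj : ∀ x : V k, Tc W x = 0 ∨ Tc W x = 2 ^ k ∨ Tc W x = -(2 ^ k) := by
    intro x
    rcases T_sq W x with h | h
    · exact Or.inl h
    · rw [hK] at h
      have h2 : (Tc W x - 2 ^ k) * (Tc W x + 2 ^ k) = 0 := by
        have : (2 : ℤ) ^ (2 * k) = (2 ^ k) ^ 2 := by rw [← pow_mul]; ring_nf
        nlinarith [h]
      rcases mul_eq_zero.mp h2 with h3 | h3
      · exact Or.inr (Or.inl (by linarith))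
      · exact Or.inr (Or.inr (by linarith))
  have hnn : ∀ x ∈ (univ : Finset (V k)), 0 ≤ (Tc W x) ^ 2 - 2 ^ k * Tc W x := by
    intro x _
    rcases hdisj x with h | h | h <;> rw [h] <;> nlinarith [pow_pos (by norm_num : (0:ℤ) < 2) k]
  have hzero : ∑ x : V k, ((Tc W x) ^ 2 - 2 ^ k * Tc W x) = 0 := by
    rw [Finset.sum_sub_distrib, sum_T_sq, ← Finset.mul_sum, sum_T]
    ring
  have := (Finset.sum_eq_zero_iff_of_nonneg hnn).mp hzero c (Finset.mem_univ c)
  rcases hdisj c with h | h | h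
  · rw [h]
  · rw [h]; positivity
  · exfalso
    rw [h] at this
    nlinarith [pow_pos (by norm_num : (0:ℤ) < 2) k]

lemma T_lb (W : Submodule (ZMod 2) (V k)) (c : V k) : -cardI W ≤ Tc W c := by
  rw [Tc, cardI, ← Finset.sum_neg_distrib]
  apply Finset.sum_le_sum
  intro x _
  by_cases hx : x ∈ W
  · rcases chi_cases (qForm k (c + x)) with h | h <;> simp [hx, h]
  · simp [hx]

lemma count_eq (W : Submodule (ZMod 2) (V k)) (c : V k) :
    2 * (((((c + ·) '' (W : Set (V k))) ∩ Sset k).ncard : ℤ)) = cardI W - Tc W c := by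
  set A : Set (V k) := (c + ·) '' (W : Set (V k)) with hA
  have hmem : ∀ x : V k, (c + x ∈ A) ↔ x ∈ W := by
    intro x
    constructor
    · rintro ⟨w, hw, he⟩
      exact (add_left_cancel he) ▸ hw
    · intro hx; exact ⟨x, hx, rfl⟩
  have h1 : Tc W c = ∑ y : V k, (if y ∈ A then chi (qForm k y) else 0) := by
    rw [Tc]
    refine Fintype.sum_equiv (Equiv.addLeft c) _ _ fun x => ?_
    show _ = if c + x ∈ A then chi (qForm k (c + x)) else 0
    by_cases hx : x ∈ W
    · rw [if_pos hx, if_pos ((hmem x).mpr hx)]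
    · rw [if_neg hx, if_neg (fun hc => hx ((hmem x).mp hc))]
  have h2 : cardI W = ∑ y : V k, (if y ∈ A then (1:ℤ) else 0) := by
    rw [cardI]
    refine Fintype.sum_equiv (Equiv.addLeft c) _ _ fun x => ?_
    show _ = if c + x ∈ A then (1:ℤ) else 0
    by_cases hx : x ∈ W
    · rw [if_pos hx, if_pos ((hmem x).mpr hx)]
    · rw [if_neg hx, if_neg (fun hc => hx ((hmem x).mp hc))]
  have h3 : ∀ y : V k, (if y ∈ A then chi (qForm k y) else 0)
      = (if y ∈ A then (1:ℤ) else 0) - 2 * (if y ∈ A ∩ Sset k then 1 else 0) := by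
    intro y
    by_cases hy : y ∈ A
    · rw [if_pos hy, if_pos hy, chi_eq]
      have hiff : (y ∈ A ∩ Sset k) ↔ (qForm k y = 1) := by
        simp [Set.mem_inter_iff, hy, Sset, Set.mem_setOf_eq]
      by_cases hq : qForm k y = 1
      · rw [if_pos hq, if_pos (hiff.mpr hq)]
      · rw [if_neg hq, if_neg (fun hc => hq (hiff.mp hc))]
    · have hny : y ∉ A ∩ Sset k := fun hc => hy hc.1
      rw [if_neg hy, if_neg hy, if_neg hny]; ring
  have h4 : ((A ∩ Sset k).ncard : ℤ) = ∑ y : V k, (if y ∈ A ∩ Sset k then (1:ℤ) else 0) := by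
    have ht : (A ∩ Sset k).toFinset = univ.filter (fun y => y ∈ A ∩ Sset k) := by
      ext y; simp
    rw [Set.ncard_eq_toFinset_card', ht, Finset.sum_boole]
  have h5 : Tc W c = cardI W - 2 * ((A ∩ Sset k).ncard : ℤ) := by
    rw [h1, Finset.sum_congr rfl fun y _ => h3 y, Finset.sum_sub_distrib, ← h2,
      ← Finset.mul_sum, ← h4]
  rw [h5]; ring

end QAux

open QAux in
theorem stmt_0 (k : ℕ) (hk : 0 < k) (d : ℕ)
    (A : Set (Fin (2 * k) → ZMod 2)) (hA : IsAffineOfDim A d) :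
    (d < k → ((A ∩ Sset k).ncard : ℝ) ≤ 2 ^ (d : ℤ)) ∧
    (k ≤ d ∧ d < 2 * k - 1 →
      ((A ∩ Sset k).ncard : ℝ) ≤ 2 ^ ((d : ℤ) - 1) + 2 ^ ((k : ℤ) - 2)) ∧
    (d = 2 * k - 1 → ((A ∩ Sset k).ncard : ℝ) ≤ 2 ^ (2 * (k : ℤ) - 2)) ∧
    (d = 2 * k → ((A ∩ Sset k).ncard : ℝ) ≤ 2 ^ (2 * (k : ℤ) - 1) - 2 ^ ((k : ℤ) - 1)) := by
  obtain ⟨c, W, hrk, hAeq⟩ := hA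
  subst hAeq
  set n : ℤ := ((((c + ·) '' (W : Set (QAux.V k))) ∩ Sset k).ncard : ℤ) with hn
  have hcount : 2 * n = cardI W - Tc W c := count_eq W c
  have hcardW : cardI W = 2 ^ d := by rw [cardI_eq, hrk]
  set m : ℕ := Module.finrank (ZMod 2) (W ⊓ perp W : Submodule (ZMod 2) (QAux.V k)) with hm
  set p : ℕ := Module.finrank (ZMod 2) (perp W : Submodule (ZMod 2) (QAux.V k)) with hp
  have hdp : (2:ℤ) ^ (d + p) = 2 ^ (2 * k) := by
    rw [pow_add, ← hcardW, ← cardI_eq (perp W)]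
    exact card_mul_card_perp W
  have hdp' : d + p = 2 * k := by
    rcases lt_trichotomy (d + p) (2 * k) with h | h | h
    · exact absurd hdp (ne_of_lt ((pow_lt_pow_iff_right₀ (by norm_num : (1:ℤ) < 2)).mpr h))
    · exact h
    · exact absurd hdp (ne_of_gt ((pow_lt_pow_iff_right₀ (by norm_num : (1:ℤ) < 2)).mpr h))
  have hmp : m ≤ p := Submodule.finrank_mono inf_le_right
  have hTaux : Tc W c ≠ 0 → (Tc W c) ^ 2 = 2 ^ (d + m) := by
    intro hne
    rcases T_sq W c with h | h
    · exact absurd h hne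
    · rw [h, hcardW, cardI_eq, ← hm, ← pow_add]
  have hsign : d + m = 2 * k → 0 ≤ Tc W c := by
    intro h
    exact T_nonneg W c (by rw [hcardW, cardI_eq, ← hm, ← pow_add, h])
  have hpos : ∀ j : ℕ, (0:ℤ) < 2 ^ j := fun j => pow_pos (by norm_num) j
  refine ⟨?_, ?_, ?_, ?_⟩
  · -- d < k
    intro _
    have hTlb : -(2:ℤ) ^ d ≤ Tc W c := by
      have := T_lb W c
      rwa [hcardW] at this
    rw [hcardW] at hcount
    have hfin : n ≤ 2 ^ d := by linarith
    rw [hn] at hfin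
    have : ((d:ℤ)) = ((d:ℕ):ℤ) := rfl
    rw [this, zpow_natCast]
    exact_mod_cast hfin
  · -- k ≤ d < 2k - 1
    rintro ⟨hkd, hd2⟩
    have hk2 : 2 ≤ k := by omega
    have hT : -(2:ℤ) ^ (k - 1) ≤ Tc W c := by
      by_contra h'
      push_neg at h'
      have hne : Tc W c ≠ 0 := by
        intro h0; rw [h0] at h'; have := hpos (k - 1); linarith
      have hsq := hTaux hne
      have hlow : (2:ℤ) ^ (2 * k - 2) < (Tc W c) ^ 2 := by
        have he : (2:ℤ) ^ (k - 1) * 2 ^ (k - 1) = 2 ^ (2 * k - 2) := by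
          rw [← pow_add]; congr 1; omega
        nlinarith [hpos (k - 1)]
      have hlt : 2 * k - 2 < d + m := by
        rw [hsq] at hlow
        exact (pow_lt_pow_iff_right₀ (by norm_num : (1:ℤ) < 2)).mp hlow
      have hcases : d + m = 2 * k - 1 ∨ d + m = 2 * k := by omega
      rcases hcases with hc1 | hc2
      · have hev : Even (2 * k - 1) := even_of_sq_eq_pow (by rw [← hc1]; exact hsq)
        obtain ⟨r, hr⟩ := hev
        omega
      · have := hsign hc2
        have := hpos (k - 1)
        linarith
    have hfin : n ≤ 2 ^ (d - 1) + 2 ^ (k - 2) := by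
      have e1 : (2:ℤ) ^ d = 2 * 2 ^ (d - 1) := by
        rw [← pow_succ']; congr 1; omega
      have e2 : (2:ℤ) ^ (k - 1) = 2 * 2 ^ (k - 2) := by
        rw [← pow_succ']; congr 1; omega
      rw [hcardW] at hcount
      linarith
    rw [hn] at hfin
    have c1 : ((d:ℤ) - 1) = ((d - 1 : ℕ) : ℤ) := by omega
    have c2 : ((k:ℤ) - 2) = ((k - 2 : ℕ) : ℤ) := by omega
    rw [c1, c2, zpow_natCast, zpow_natCast]
    exact_mod_cast hfin
  · -- d = 2k - 1
    intro hd
    have hT : 0 ≤ Tc W c := by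
      rcases eq_or_ne (Tc W c) 0 with h0 | hne
      · rw [h0]
      · have hsq := hTaux hne
        have hcases : d + m = 2 * k ∨ d + m = 2 * k - 1 := by omega
        rcases hcases with hc | hc
        · exact hsign hc
        · exfalso
          have hev : Even (2 * k - 1) := even_of_sq_eq_pow (by rw [← hc]; exact hsq)
          obtain ⟨r, hr⟩ := hev
          omega
    have hfin : n ≤ 2 ^ (2 * k - 2) := by
      have e1 : (2:ℤ) ^ d = 2 * 2 ^ (2 * k - 2) := by
        rw [← pow_succ']; congr 1; omega
      rw [hcardW] at hcount
      linarith
    rw [hn] at hfin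
    have c1 : (2 * (k:ℤ) - 2) = ((2 * k - 2 : ℕ) : ℤ) := by omega
    rw [c1, zpow_natCast]
    exact_mod_cast hfin
  · -- d = 2k
    intro hd
    have hVfin : Module.finrank (ZMod 2) (QAux.V k) = 2 * k := by
      rw [Module.finrank_pi]
      simp
    have hWtop : W = ⊤ := Submodule.eq_top_of_finrank_eq (by rw [hrk, hd, hVfin])
    have hT : Tc W c = 2 ^ k := by
      rw [Tc, hWtop]
      simp only [Submodule.mem_top, if_true]
      rw [Fintype.sum_equiv (Equiv.addLeft c)
        (fun x => chi (qForm k (c + x))) (fun y => chi (qForm k y)) (fun x => rfl)]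
      exact gauss
    have hfin : n = 2 ^ (2 * k - 1) - 2 ^ (k - 1) := by
      have e1 : (2:ℤ) ^ d = 2 * 2 ^ (2 * k - 1) := by
        rw [← pow_succ']; congr 1; omega
      have e2 : (2:ℤ) ^ k = 2 * 2 ^ (k - 1) := by
        rw [← pow_succ']; congr 1; omega
      rw [hcardW, hT] at hcount
      linarith
    have c1 : (2 * (k:ℤ) - 1) = ((2 * k - 1 : ℕ) : ℤ) := by omega
    have c2 : ((k:ℤ) - 1) = ((k - 1 : ℕ) : ℤ) := by omega
    rw [c1, c2, zpow_natCast, zpow_natCast]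
    have : ((((c + ·) '' (W : Set (QAux.V k))) ∩ Sset k).ncard : ℝ)
        = ((n : ℤ) : ℝ) := by push_cast [hn]; ring
    rw [this, hfin]
    push_cast
    linarith [ (0:ℝ) ]
end

section
/- For every positive integer k and every affine subspace A of 𝔽₂^{2k} of dimension 2k-1, one has |A ∩ R_k| ≤ 2^{2k-2} + 2^{k-1} and |A ∩ S_k| ≤ 2^{2k-2}. -/
/-- `R_k = {x ∈ 𝔽₂^{2k} : q_k(x) = 0}`. -/
def Rset (k : ℕ) : Set (Fin (2 * k) → ZMod 2) := {x | qForm k x = 0}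

open Finset Function

-- fiber counting for surjective linear maps
lemma fiber_card {V N : Type*} [Fintype V] [Fintype N] [DecidableEq V] [DecidableEq N]
    [AddCommGroup V] [AddCommGroup N] [Module (ZMod 2) V] [Module (ZMod 2) N]
    (φ : V →ₗ[ZMod 2] N) (hs : Surjective φ) (b : N) :
    (univ.filter (fun x => φ x = b)).card * Fintype.card N = Fintype.card V := by
  have h1 : ∀ b' : N, (univ.filter (fun x => φ x = b')).card
      = (univ.filter (fun x => φ x = b)).card := by
    intro b'
    obtain ⟨d, hd⟩ := hs (b - b')
    apply Finset.card_bij (fun x _ => x + d)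
    · intro x hx
      simp only [mem_filter, mem_univ, true_and] at hx ⊢
      rw [map_add, hx, hd]; abel
    · intro x hx y hy h; exact add_right_cancel h
    · intro y hy
      refine ⟨y - d, ?_, by abel⟩
      simp only [mem_filter, mem_univ, true_and] at hy ⊢
      rw [map_sub, hy, hd]; abel
  have h2 : Fintype.card V = ∑ b' : N, (univ.filter (fun x => φ x = b')).card := by
    rw [← Finset.card_univ]
    exact Finset.card_eq_sum_card_fiberwise (fun x _ => mem_univ (φ x))
  rw [h2]
  simp only [h1]
  rw [Finset.sum_const, card_univ, smul_eq_mul, mul_comm]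

lemma zmod2_cases (b : ZMod 2) : b = 0 ∨ b = 1 := by revert b; decide

variable {k : ℕ}

/-- inner product as a linear map in the second argument -/
def ipL (u : Fin k → ZMod 2) : (Fin k → ZMod 2) →ₗ[ZMod 2] ZMod 2 where
  toFun v := ∑ i, u i * v i
  map_add' x y := by simp [mul_add, Finset.sum_add_distrib]
  map_smul' c x := by simp [Finset.mul_sum]; ring_nf; simp [mul_assoc, mul_left_comm]

lemma ipL_single (u : Fin k → ZMod 2) (j : Fin k) :
    ipL u (Pi.single j 1) = u j := by
  simp only [ipL, LinearMap.coe_mk, AddHom.coe_mk]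
  rw [Finset.sum_eq_single j]
  · simp
  · intro i _ hij; simp [Pi.single_apply, hij]
  · simp

lemma surj_of_one {V : Type*} [AddCommGroup V] [Module (ZMod 2) V]
    (φ : V →ₗ[ZMod 2] ZMod 2) (x : V) (hx : φ x = 1) : Surjective φ := by
  intro b
  rcases zmod2_cases b with rfl | rfl
  · exact ⟨0, map_zero φ⟩
  · exact ⟨x, hx⟩

lemma card_fun2 : Fintype.card (Fin k → ZMod 2) = 2 ^ k := by
  simp [Fintype.card_fun]

lemma L1 (u : Fin k → ZMod 2) (hu : u ≠ 0) (b : ZMod 2) :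
    (univ.filter (fun v : Fin k → ZMod 2 => ∑ i, u i * v i = b)).card = 2 ^ (k - 1) := by
  obtain ⟨j, hj⟩ : ∃ j, u j ≠ 0 := by
    by_contra h; push_neg at h; exact hu (funext fun j => h j)
  have hj1 : u j = 1 := (zmod2_cases (u j)).resolve_left hj
  have hk : 1 ≤ k := by have := j.2; omega
  have hs : Surjective (ipL u) := surj_of_one _ (Pi.single j 1) (by rw [ipL_single, hj1])
  have := fiber_card (ipL u) hs b
  rw [card_fun2] at this
  have hcard : Fintype.card (ZMod 2) = 2 := rfl
  rw [hcard] at this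
  have h2 : 2 ^ k = 2 ^ (k - 1) * 2 := by
    rw [← pow_succ]; congr 1; omega
  have : (univ.filter (fun v : Fin k → ZMod 2 => ipL u v = b)).card = 2 ^ (k-1) := by omega
  convert this using 2
  rfl

lemma ipL_single' (u : Fin k → ZMod 2) (j : Fin k) (c : ZMod 2) :
    ipL u (Pi.single j c) = u j * c := by
  simp only [ipL, LinearMap.coe_mk, AddHom.coe_mk]
  rw [Finset.sum_eq_single j]
  · simp
  · intro i _ hij; simp [Pi.single_apply, hij]
  · simp

lemma L2 (u β : Fin k → ZMod 2) (hu : u ≠ 0) (hb : β ≠ 0) (hub : u ≠ β) (b1 b2 : ZMod 2) :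
    (univ.filter (fun v : Fin k → ZMod 2 => (∑ i, u i * v i = b1) ∧ ∑ i, β i * v i = b2)).card
      = 2 ^ (k - 2) := by
  set φ := (ipL u).prod (ipL β) with hφ
  have hsurj : Surjective φ := by
    obtain ⟨i0, hi0⟩ : ∃ i, u i ≠ β i := by
      by_contra h; push_neg at h; exact hub (funext h)
    rintro ⟨a, b⟩
    rcases zmod2_cases (β i0) with hβ0 | hβ0
    · have hu0 : u i0 = 1 := by
        rcases zmod2_cases (u i0) with h | h
        · exact absurd (h.trans hβ0.symm) hi0
        · exact h
      obtain ⟨i1, hi1⟩ : ∃ i, β i ≠ 0 := by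
        by_contra h; push_neg at h; exact hb (funext fun i => h i)
      have hβ1 : β i1 = 1 := (zmod2_cases _).resolve_left hi1
      have hne : i0 ≠ i1 := fun h => hi1 (h ▸ hβ0)
      refine ⟨Pi.single i0 (a + u i1 * b) + Pi.single i1 b, ?_⟩
      simp only [hφ, LinearMap.prod_apply, Function.prod, map_add, ipL_single']
      rw [Prod.mk_add_mk, Prod.mk.injEq]
      constructor
      · rw [hu0, one_mul, add_assoc, CharTwo.add_self_eq_zero, add_zero]
      · rw [hβ0, hβ1, zero_mul, one_mul, zero_add]
    · have hu0 : u i0 = 0 := by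
        rcases zmod2_cases (u i0) with h | h
        · exact h
        · exact absurd (h.trans hβ0.symm) hi0
      obtain ⟨i1, hi1⟩ : ∃ i, u i ≠ 0 := by
        by_contra h; push_neg at h; exact hu (funext fun i => h i)
      have hu1 : u i1 = 1 := (zmod2_cases _).resolve_left hi1
      have hne : i0 ≠ i1 := fun h => hi1 (h ▸ hu0)
      refine ⟨Pi.single i1 a + Pi.single i0 (b + β i1 * a), ?_⟩
      simp only [hφ, LinearMap.prod_apply, Function.prod, map_add, ipL_single']
      rw [Prod.mk_add_mk, Prod.mk.injEq]
      constructor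
      · rw [hu1, hu0, one_mul, zero_mul, add_zero]
      · rw [hβ0, one_mul, add_comm b, ← add_assoc, CharTwo.add_self_eq_zero, zero_add]
  have hk : 2 ≤ k := by
    have h3 : ({0, u, β} : Finset (Fin k → ZMod 2)).card = 3 := by
      rw [Finset.card_eq_three]
      exact ⟨0, u, β, Ne.symm hu, Ne.symm hb, hub, rfl⟩
    have := Finset.card_le_card (Finset.subset_univ ({0, u, β} : Finset (Fin k → ZMod 2)))
    rw [h3, Finset.card_univ, card_fun2] at this
    by_contra h
    interval_cases k <;> simp_all
  have := fiber_card φ hsurj (b1, b2)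
  rw [card_fun2] at this
  have hcard : Fintype.card (ZMod 2 × ZMod 2) = 4 := rfl
  rw [hcard] at this
  have h2 : 2 ^ k = 2 ^ (k - 2) * 4 := by
    have hkk : k = (k - 2) + 2 := by omega
    conv_lhs => rw [hkk]
    rw [pow_add]; norm_num
  have key : (univ.filter (fun v : Fin k → ZMod 2 => φ v = (b1, b2))).card = 2 ^ (k-2) := by omega
  rw [← key]
  apply Finset.card_bij (fun v _ => v)
  · intro v hv
    simp only [mem_filter, mem_univ, true_and] at hv ⊢
    simp only [hφ, LinearMap.prod_apply, Function.prod, Prod.mk.injEq]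
    exact hv
  · intro a b _ _ h; exact h
  · intro v hv
    refine ⟨v, ?_, rfl⟩
    simp only [mem_filter, mem_univ, true_and, hφ, LinearMap.prod_apply, Function.prod,
      Prod.mk.injEq] at hv ⊢
    exact hv

lemma g1 (u : Fin k → ZMod 2) :
    (univ.filter (fun v : Fin k → ZMod 2 => ∑ i, u i * v i = 1)).card ≤ 2 ^ (k - 1) := by
  by_cases hu : u = 0
  · have : (univ.filter (fun v : Fin k → ZMod 2 => ∑ i, u i * v i = 1)) = ∅ := by
      rw [Finset.filter_eq_empty_iff]
      intro v _
      rw [hu]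
      simp
    rw [this]
    simp
  · exact le_of_eq (L1 u hu 1)


lemma pow_helper1 (k : ℕ) : (2:ℕ)^(k-1) * 2^(k-1) ≤ 2^(2*k-2) := by
  rw [← pow_add]
  exact Nat.pow_le_pow_right (by norm_num) (by omega)

lemma pow_helper2 : ∀ k : ℕ, 0 < k → 2^(k-1) + (2^k - 2) * 2^(k-2) ≤ 2^(2*k-2)
  | 1, _ => by norm_num
  | (m+2), _ => by
      have e1 : 1 ≤ (2:ℕ)^m := Nat.one_le_two_pow
      have h1 : (2:ℕ)^(m+2) - 2 = 4*2^m - 2 := by rw [pow_add]; ring_nf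
      calc 2^(m+2-1) + (2^(m+2)-2)*2^(m+2-2)
          = 2*2^m + (4*2^m - 2)*2^m := by
            rw [show m+2-1 = m+1 from rfl, show m+2-2 = m from rfl, h1, pow_succ]; ring_nf
        _ = 2*2^m + (4*2^m*2^m - 2*2^m) := by rw [Nat.sub_mul]
        _ = 4*2^m*2^m := Nat.add_sub_cancel' (by nlinarith)
        _ ≤ 2^(2*(m+2)-2) := le_of_eq (by
            rw [show 2*(m+2)-2 = m+m+2 by omega, pow_add, pow_add]; ring)

lemma keyProd (hk : 0 < k) (α β : Fin k → ZMod 2) (hαβ : ¬(α = 0 ∧ β = 0)) (b : ZMod 2) :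
    (univ.filter (fun p : (Fin k → ZMod 2) × (Fin k → ZMod 2) =>
      (∑ i, p.1 i * p.2 i = 1) ∧ (∑ i, α i * p.1 i) + (∑ i, β i * p.2 i) = b)).card
      ≤ 2 ^ (2 * k - 2) := by
  classical
  have hsum : (univ.filter (fun p : (Fin k → ZMod 2) × (Fin k → ZMod 2) =>
      (∑ i, p.1 i * p.2 i = 1) ∧ (∑ i, α i * p.1 i) + (∑ i, β i * p.2 i) = b)).card
      = ∑ u : Fin k → ZMod 2, (univ.filter (fun v : Fin k → ZMod 2 =>
          (∑ i, u i * v i = 1) ∧ (∑ i, α i * u i) + (∑ i, β i * v i) = b)).card := by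
    simp only [Finset.card_filter]
    simp only [Fintype.sum_prod_type]
  rw [hsum]
  by_cases hβ : β = 0
  · have hα : α ≠ 0 := fun h => hαβ ⟨h, hβ⟩
    subst hβ
    have hbd : ∀ u : Fin k → ZMod 2,
        (univ.filter (fun v : Fin k → ZMod 2 =>
          (∑ i, u i * v i = 1) ∧ (∑ i, α i * u i) + (∑ i, (0:(Fin k → ZMod 2)) i * v i) = b)).card
        ≤ if (∑ i, α i * u i) = b then 2 ^ (k-1) else 0 := by
      intro u
      by_cases hc : (∑ i, α i * u i) = b
      · rw [if_pos hc]
        refine le_trans (Finset.card_le_card (Finset.monotone_filter_right _ ?_)) (g1 u)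
        intro v _ hv
        exact hv.1
      · rw [if_neg hc, Nat.le_zero, Finset.card_eq_zero, Finset.filter_eq_empty_iff]
        intro v _ h
        exact hc (by simpa using h.2)
    calc ∑ u : Fin k → ZMod 2, (univ.filter (fun v : Fin k → ZMod 2 =>
          (∑ i, u i * v i = 1) ∧ (∑ i, α i * u i) + (∑ i, (0:(Fin k → ZMod 2)) i * v i) = b)).card
        ≤ ∑ u : Fin k → ZMod 2, if (∑ i, α i * u i) = b then 2 ^ (k-1) else 0 :=
          Finset.sum_le_sum fun u _ => hbd u
      _ = (univ.filter (fun u : Fin k → ZMod 2 => (∑ i, α i * u i) = b)).card * 2 ^ (k-1) := by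
          simp only [← Finset.sum_filter, Finset.sum_const, smul_eq_mul]
      _ = 2 ^ (k-1) * 2 ^ (k-1) := by rw [L1 α hα b]
      _ ≤ 2 ^ (2*k-2) := pow_helper1 k
  · -- β ≠ 0
    have hbd : ∀ u : Fin k → ZMod 2,
        (univ.filter (fun v : Fin k → ZMod 2 =>
          (∑ i, u i * v i = 1) ∧ (∑ i, α i * u i) + (∑ i, β i * v i) = b)).card
        ≤ if u = 0 then 0 else if u = β then 2 ^ (k-1) else 2 ^ (k-2) := by
      intro u
      by_cases h0 : u = 0
      · rw [if_pos h0, Nat.le_zero, Finset.card_eq_zero, Finset.filter_eq_empty_iff]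
        intro v _ h
        have h1 := h.1
        rw [h0] at h1
        simp at h1
      · rw [if_neg h0]
        by_cases hb2 : u = β
        · rw [if_pos hb2]
          refine le_trans (Finset.card_le_card (Finset.monotone_filter_right _ ?_)) (g1 u)
          intro v _ hv
          exact hv.1
        · rw [if_neg hb2]
          have heq : (univ.filter (fun v : Fin k → ZMod 2 =>
              (∑ i, u i * v i = 1) ∧ (∑ i, α i * u i) + (∑ i, β i * v i) = b))
              = (univ.filter (fun v : Fin k → ZMod 2 =>
              (∑ i, u i * v i = 1) ∧ (∑ i, β i * v i) = b - ∑ i, α i * u i)) := by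
            apply Finset.filter_congr
            intro v _
            refine and_congr_right fun _ => ?_
            rw [eq_sub_iff_add_eq']
          rw [heq, L2 u β h0 hβ hb2 1 _]
    have hbsum : ∑ u : Fin k → ZMod 2,
        (if u = 0 then 0 else if u = β then 2 ^ (k-1) else 2 ^ (k-2))
        = (2^k - 2) * 2^(k-2) + 2^(k-1) := by
      have h0β : (0 : Fin k → ZMod 2) ∉ ({β} : Finset (Fin k → ZMod 2)) := by
        simp [Ne.symm hβ]
      have hsub : ({0, β} : Finset (Fin k → ZMod 2)) ⊆ univ := Finset.subset_univ _
      rw [← Finset.sum_sdiff hsub]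
      have hA : ∑ u ∈ univ \ ({0, β} : Finset (Fin k → ZMod 2)),
          (if u = 0 then 0 else if u = β then 2 ^ (k-1) else 2 ^ (k-2))
          = (2^k - 2) * 2^(k-2) := by
        rw [Finset.sum_congr rfl (fun u hu => ?_), Finset.sum_const, smul_eq_mul]
        · congr 1
          rw [Finset.card_sdiff_of_subset hsub, Finset.card_univ, card_fun2,
            Finset.card_insert_of_notMem h0β, Finset.card_singleton]
        · simp only [Finset.mem_sdiff, Finset.mem_insert, Finset.mem_singleton] at hu
          rw [if_neg (fun h => hu.2 (Or.inl h)), if_neg (fun h => hu.2 (Or.inr h))]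
      have hB : ∑ u ∈ ({0, β} : Finset (Fin k → ZMod 2)),
          (if u = 0 then 0 else if u = β then 2 ^ (k-1) else 2 ^ (k-2))
          = 2^(k-1) := by
        rw [Finset.sum_insert h0β, Finset.sum_singleton, if_pos rfl,
          if_neg hβ, if_pos rfl, zero_add]
      rw [hA, hB]
    calc ∑ u : Fin k → ZMod 2, (univ.filter (fun v : Fin k → ZMod 2 =>
          (∑ i, u i * v i = 1) ∧ (∑ i, α i * u i) + (∑ i, β i * v i) = b)).card
        ≤ ∑ u : Fin k → ZMod 2,
          (if u = 0 then 0 else if u = β then 2 ^ (k-1) else 2 ^ (k-2)) :=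
          Finset.sum_le_sum fun u _ => hbd u
      _ = (2^k - 2) * 2^(k-2) + 2^(k-1) := hbsum
      _ ≤ 2 ^ (2*k-2) := by rw [add_comm]; exact pow_helper2 k hk

lemma cardSProd (hk : 0 < k) :
    (univ.filter (fun p : (Fin k → ZMod 2) × (Fin k → ZMod 2) =>
      ∑ i, p.1 i * p.2 i = 1)).card = (2^k - 1) * 2^(k-1) := by
  classical
  have hsum : (univ.filter (fun p : (Fin k → ZMod 2) × (Fin k → ZMod 2) =>
      ∑ i, p.1 i * p.2 i = 1)).card
      = ∑ u : Fin k → ZMod 2,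
        (univ.filter (fun v : Fin k → ZMod 2 => ∑ i, u i * v i = 1)).card := by
    simp only [Finset.card_filter]
    rw [Fintype.sum_prod_type]
  rw [hsum]
  have hbd : ∀ u : Fin k → ZMod 2,
      (univ.filter (fun v : Fin k → ZMod 2 => ∑ i, u i * v i = 1)).card
      = if u = 0 then 0 else 2 ^ (k-1) := by
    intro u
    by_cases h0 : u = 0
    · rw [if_pos h0, Finset.card_eq_zero, Finset.filter_eq_empty_iff]
      intro v _ h
      rw [h0] at h
      simp at h
    · rw [if_neg h0]
      exact L1 u h0 1
  rw [Finset.sum_congr rfl fun u _ => hbd u]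
  have h0sub : ({0} : Finset (Fin k → ZMod 2)) ⊆ univ := Finset.subset_univ _
  rw [← Finset.sum_sdiff h0sub]
  have hA : ∑ u ∈ univ \ ({0} : Finset (Fin k → ZMod 2)),
      (if u = 0 then 0 else 2 ^ (k-1)) = (2^k - 1) * 2^(k-1) := by
    rw [Finset.sum_congr rfl (fun u hu => ?_), Finset.sum_const, smul_eq_mul]
    · congr 1
      rw [Finset.card_sdiff_of_subset h0sub, Finset.card_univ, card_fun2, Finset.card_singleton]
    · simp only [Finset.mem_sdiff, Finset.mem_singleton] at hu
      rw [if_neg hu.2]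
  rw [hA, Finset.sum_singleton, if_pos rfl, add_zero]

lemma card_filter_equiv {γ δ : Type*} [Fintype γ] [Fintype δ] [DecidableEq δ] (E : γ ≃ δ)
    (P : γ → Prop) (Q : δ → Prop) [DecidablePred P] [DecidablePred Q]
    (h : ∀ x, P x ↔ Q (E x)) :
    (univ.filter P).card = (univ.filter Q).card := by
  apply Finset.card_bij (fun x _ => E x)
  · intro x hx
    simp only [mem_filter, mem_univ, true_and] at hx ⊢
    exact (h x).mp hx
  · intro x _ y _ hxy
    exact E.injective hxy
  · intro y hy
    simp only [mem_filter, mem_univ, true_and] at hy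
    refine ⟨E.symm y, ?_, by simp⟩
    simp only [mem_filter, mem_univ, true_and, h, Equiv.apply_symm_apply]
    exact hy

/-- split `𝔽₂^{2k}` as a product of two copies of `𝔽₂^k`. -/
def splitE (k : ℕ) : (Fin (2*k) → ZMod 2) ≃ ((Fin k → ZMod 2) × (Fin k → ZMod 2)) where
  toFun x := (fun i => x ⟨i.1, by have := i.2; omega⟩, fun i => x ⟨k + i.1, by have := i.2; omega⟩)
  invFun p := fun j => if h : j.1 < k then p.1 ⟨j.1, h⟩ else p.2 ⟨j.1 - k, by have := j.2; omega⟩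
  left_inv x := by
    funext j
    by_cases h : j.1 < k
    · simp only [dif_pos h]
    · simp only [dif_neg h]
      congr 1
      exact Fin.ext (by have := j.2; simp; omega)
  right_inv p := by
    refine Prod.ext (funext fun i => ?_) (funext fun i => ?_)
    · simp only [dif_pos i.2]
    · have h : ¬ (k + i.1 < k) := by omega
      simp only [dif_neg h]
      congr 1
      exact Fin.ext (by simp)

lemma sum_split {M : Type*} [AddCommMonoid M] (k : ℕ) (f : Fin (2*k) → M) :
    ∑ j, f j = (∑ i : Fin k, f ⟨i.1, by have := i.2; omega⟩)
      + ∑ i : Fin k, f ⟨k + i.1, by have := i.2; omega⟩ := by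
  have h : k + k = 2 * k := (two_mul k).symm
  rw [← (finCongr h).sum_comp f, Fin.sum_univ_add]
  rfl

lemma splitE_qForm (k : ℕ) (x : Fin (2*k) → ZMod 2) :
    qForm k x = ∑ i, (splitE k x).1 i * (splitE k x).2 i := rfl

lemma splitE_lin (k : ℕ) (c x : Fin (2*k) → ZMod 2) :
    ∑ i, c i * x i = (∑ i, (splitE k c).1 i * (splitE k x).1 i)
      + ∑ i, (splitE k c).2 i * (splitE k x).2 i := by
  rw [sum_split k (fun j => c j * x j)]
  rfl

lemma splitE_ne_zero (k : ℕ) (c : Fin (2*k) → ZMod 2) (hc : c ≠ 0) :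
    ¬((splitE k c).1 = 0 ∧ (splitE k c).2 = 0) := by
  rintro ⟨h1, h2⟩
  apply hc
  funext j
  by_cases hj : j.1 < k
  · have := congrFun h1 ⟨j.1, hj⟩
    simpa [splitE, Fin.eta] using this
  · have := congrFun h2 ⟨j.1 - k, by have := j.2; omega⟩
    simp only [splitE, Equiv.coe_fn_mk, Pi.zero_apply] at this
    rw [show (⟨k + (j.1 - k), by have := j.2; omega⟩ : Fin (2*k)) = j from Fin.ext (by simp; omega)] at this
    exact this

lemma key2k (k : ℕ) (hk : 0 < k) (c : Fin (2*k) → ZMod 2) (hc : c ≠ 0) (b : ZMod 2) :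
    (univ.filter (fun x : Fin (2*k) → ZMod 2 => qForm k x = 1 ∧ ∑ i, c i * x i = b)).card
      ≤ 2 ^ (2*k-2) := by
  classical
  rw [card_filter_equiv (splitE k) _
    (fun p : (Fin k → ZMod 2) × (Fin k → ZMod 2) =>
      (∑ i, p.1 i * p.2 i = 1) ∧ (∑ i, (splitE k c).1 i * p.1 i)
        + (∑ i, (splitE k c).2 i * p.2 i) = b)
    (fun x => by rw [splitE_qForm, splitE_lin k c x])]
  exact keyProd hk _ _ (splitE_ne_zero k c hc) b

lemma cardS2k (k : ℕ) (hk : 0 < k) :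
    (univ.filter (fun x : Fin (2*k) → ZMod 2 => qForm k x = 1)).card
      = (2^k - 1) * 2^(k-1) := by
  classical
  rw [card_filter_equiv (splitE k) _
    (fun p : (Fin k → ZMod 2) × (Fin k → ZMod 2) => (∑ i, p.1 i * p.2 i = 1))
    (fun x => by rw [splitE_qForm])]
  exact cardSProd hk

lemma zmod2_zero_iff (a : ZMod 2) : a = 0 ↔ ¬ a = 1 := by revert a; decide

lemma final_arith (k : ℕ) (hk : 0 < k) (T T' Rc : ℕ)
    (hT : T ≤ 2^(2*k-2)) (hT' : T' ≤ 2^(2*k-2))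
    (hS : T + T' = (2^k-1)*2^(k-1)) (hA : T + Rc = 2^(2*k-1)) :
    Rc ≤ 2^(2*k-2) + 2^(k-1) ∧ T ≤ 2^(2*k-2) := by
  have e1 : (2^k-1)*2^(k-1) + 2^(k-1) = 2^(2*k-1) := by
    rw [Nat.sub_mul, one_mul]
    have h2 : 2^(k-1) ≤ 2^k * 2^(k-1) :=
      Nat.le_mul_of_pos_left _ (Nat.pow_pos (by norm_num))
    rw [Nat.sub_add_cancel h2, ← pow_add]
    congr 1
    omega
  have e2 : 2^(2*k-1) = 2 * 2^(2*k-2) := by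
    rw [show 2*k-1 = (2*k-2)+1 by omega, pow_succ]
    ring
  have e3 : 2^(k-1) ≤ 2^(2*k-2) := Nat.pow_le_pow_right (by norm_num) (by omega)
  omega

lemma zmod2_ne_iff (a b : ZMod 2) : ¬(a = b) ↔ a = b + 1 := by revert a b; decide

theorem stmt_2 (k : ℕ) (hk : 0 < k)
    (A : Set (Fin (2 * k) → ZMod 2)) (hA : IsAffineOfDim A (2 * k - 1)) :
    (A ∩ Rset k).ncard ≤ 2 ^ (2 * k - 2) + 2 ^ (k - 1) ∧
    (A ∩ Sset k).ncard ≤ 2 ^ (2 * k - 2) := by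
  classical
  obtain ⟨a, W, hW, hAeq⟩ := hA
  have hV : Module.finrank (ZMod 2) (Fin (2 * k) → ZMod 2) = 2 * k := by
    rw [Module.finrank_fintype_fun_eq_card, Fintype.card_fin]
  -- build the linear functional with kernel W
  have hQ : Module.finrank (ZMod 2) ((Fin (2 * k) → ZMod 2) ⧸ W) = Module.finrank (ZMod 2) (ZMod 2) := by
    have h1 := Submodule.finrank_quotient_add_finrank W
    rw [hV, hW] at h1
    rw [Module.finrank_self]
    set r := Module.finrank (ZMod 2) ((Fin (2 * k) → ZMod 2) ⧸ W) with hr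
    omega
  let e : ((Fin (2 * k) → ZMod 2) ⧸ W) ≃ₗ[ZMod 2] ZMod 2 := LinearEquiv.ofFinrankEq _ _ hQ
  let φ : (Fin (2 * k) → ZMod 2) →ₗ[ZMod 2] ZMod 2 := e.toLinearMap.comp W.mkQ
  have hker : ∀ x : Fin (2 * k) → ZMod 2, φ x = 0 ↔ x ∈ W := by
    intro x
    show e (W.mkQ x) = 0 ↔ _
    rw [e.map_eq_zero_iff, Submodule.mkQ_apply, Submodule.Quotient.mk_eq_zero]
  have hmem : ∀ x : Fin (2 * k) → ZMod 2, x ∈ A ↔ φ x = φ a := by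
    intro x
    rw [hAeq]
    constructor
    · rintro ⟨w, hw, rfl⟩
      have : φ w = 0 := (hker w).mpr hw
      rw [map_add, this, add_zero]
    · intro h
      refine ⟨x - a, (hker _).mp ?_, by show a + (x - a) = x; rw [add_comm]; exact sub_add_cancel x a⟩
      rw [map_sub, h, sub_self]
  set b := φ a with hb
  set c : Fin (2 * k) → ZMod 2 := fun i => φ (fun j => if i = j then 1 else 0) with hcdef
  have hφsum : ∀ x, φ x = ∑ i, c i * x i := by
    intro x
    rw [LinearMap.pi_apply_eq_sum_univ φ x]
    exact Finset.sum_congr rfl fun i _ => by rw [smul_eq_mul, mul_comm]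
  have hc : c ≠ 0 := by
    intro h0
    have hφ0 : ∀ x, φ x = 0 := by
      intro x
      rw [hφsum x]
      refine Finset.sum_eq_zero fun i _ => ?_
      rw [show c i = 0 from congrFun h0 i, zero_mul]
    have hWtop : W = ⊤ := by
      rw [Submodule.eq_top_iff']
      intro x
      exact (hker x).mp (hφ0 x)
    rw [hWtop, finrank_top, hV] at hW
    omega
  have hmem' : ∀ x, x ∈ A ↔ ∑ i, c i * x i = b := by
    intro x
    rw [hmem x, hφsum x]
  -- the three finsets
  have hSeq : A ∩ Sset k
      = ↑(univ.filter (fun x : Fin (2*k) → ZMod 2 => qForm k x = 1 ∧ ∑ i, c i * x i = b)) := by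
    ext x
    simp only [Set.mem_inter_iff, Finset.coe_filter, Set.mem_setOf_eq, Finset.mem_univ,
      true_and, Sset]
    rw [hmem' x]
    exact and_comm
  have hReq : A ∩ Rset k
      = ↑(univ.filter (fun x : Fin (2*k) → ZMod 2 => (∑ i, c i * x i = b) ∧ ¬ qForm k x = 1)) := by
    ext x
    simp only [Set.mem_inter_iff, Finset.coe_filter, Set.mem_setOf_eq, Finset.mem_univ,
      true_and, Rset]
    rw [hmem' x, zmod2_zero_iff]
  -- partition facts
  have hNA : (univ.filter (fun x : Fin (2*k) → ZMod 2 => ∑ i, c i * x i = b)).card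
      = 2^(2*k-1) := L1 (k := 2*k) c hc b
  have hNS : (univ.filter (fun x : Fin (2*k) → ZMod 2 => qForm k x = 1)).card
      = (2^k-1)*2^(k-1) := cardS2k k hk
  have hsplitS := Finset.card_filter_add_card_filter_not
    (s := univ.filter (fun x : Fin (2*k) → ZMod 2 => qForm k x = 1))
    (p := fun x => ∑ i, c i * x i = b)
  rw [Finset.filter_filter, Finset.filter_filter, hNS] at hsplitS
  have hsplitA := Finset.card_filter_add_card_filter_not
    (s := univ.filter (fun x : Fin (2*k) → ZMod 2 => ∑ i, c i * x i = b))
    (p := fun x => qForm k x = 1)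
  rw [Finset.filter_filter, Finset.filter_filter, hNA] at hsplitA
  -- identify the pieces
  have hcomm : (univ.filter (fun x : Fin (2*k) → ZMod 2 =>
      (∑ i, c i * x i = b) ∧ qForm k x = 1))
      = univ.filter (fun x : Fin (2*k) → ZMod 2 => qForm k x = 1 ∧ ∑ i, c i * x i = b) :=
    Finset.filter_congr fun x _ => and_comm
  rw [hcomm] at hsplitA
  have hbb : (univ.filter (fun x : Fin (2*k) → ZMod 2 => qForm k x = 1 ∧ ¬ ∑ i, c i * x i = b))
      = univ.filter (fun x : Fin (2*k) → ZMod 2 => qForm k x = 1 ∧ ∑ i, c i * x i = b + 1) :=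
    Finset.filter_congr fun x _ => by rw [zmod2_ne_iff]
  rw [hbb] at hsplitS
  have hT := key2k k hk c hc b
  have hT' := key2k k hk c hc (b+1)
  have hfin := final_arith k hk _ _ _ hT hT' hsplitS hsplitA
  rw [hSeq, hReq, Set.ncard_coe_finset, Set.ncard_coe_finset]
  exact ⟨hfin.1, hfin.2⟩
end

section
/- Let d ≥ k > 1 be integers and let A be a d-dimensional affine subspace of 𝔽₂^{2k}. Then F := π₁(A) is an affine subspace of 𝔽₂², and there exist a linear subspace W' of 𝔽₂^{2k-2} with dim W' = d - dim F and, for each σ ∈ F, an affine subspace A'_σ ⊆ π₀(A) of 𝔽₂^{2k-2} which is a translation of W', such that A ∩ R_k is the disjoint union over σ ∈ F of the sets (A'_σ ∩ S_{k-1}) ⊗ σ when σ = (1,1) and (A'_σ ∩ R_{k-1}) ⊗ σ when σ ≠ (1,1), and A ∩ S_k is the disjoint union over σ ∈ F of the sets (A'_σ ∩ R_{k-1}) ⊗ σ when σ = (1,1) and (A'_σ ∩ S_{k-1}) ⊗ σ when σ ≠ (1,1). -/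
/-- Writing `w ∈ 𝔽₂^{2k}` as `w = (x, a, y, b)` with `x, y ∈ 𝔽₂^{k-1}` and
`a, b ∈ 𝔽₂`, the root map `π₀(x,a,y,b) = (x,y) ∈ 𝔽₂^{2(k-1)}`. -/
def proj0 (k : ℕ) (w : Fin (2 * k) → ZMod 2) : Fin (2 * (k - 1)) → ZMod 2 :=
  fun i =>
    if h : i.1 < k - 1 then w ⟨i.1, by have := i.2; omega⟩
    else w ⟨i.1 + 1, by have := i.2; omega⟩

/-- The suffix map `π₁(x,a,y,b) = (a,b) ∈ 𝔽₂²`. -/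
def proj1 (k : ℕ) (w : Fin (2 * k) → ZMod 2) : ZMod 2 × ZMod 2 :=
  if h : 0 < k then (w ⟨k - 1, by omega⟩, w ⟨2 * k - 1, by omega⟩) else 0

/-- For `X ⊆ 𝔽₂^{2(k-1)}` and a suffix `σ = (a,b) ∈ 𝔽₂²`,
`X ⊗ σ = {(x,a,y,b) : (x,y) ∈ X} ⊆ 𝔽₂^{2k}`. -/
def tensorSuffix (k : ℕ) (X : Set (Fin (2 * (k - 1)) → ZMod 2))
    (σ : ZMod 2 × ZMod 2) : Set (Fin (2 * k) → ZMod 2) :=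
  {w | proj0 k w ∈ X ∧ proj1 k w = σ}

/-! ### Auxiliary linear maps -/

def p0L (m : ℕ) : (Fin (2*(m+1)) → ZMod 2) →ₗ[ZMod 2] (Fin (2*m) → ZMod 2) :=
  LinearMap.funLeft _ _ (fun i : Fin (2*m) =>
    if _ : (i : ℕ) < m then ⟨i.1, by have := i.2; omega⟩ else ⟨i.1+1, by have := i.2; omega⟩)

def p1L (m : ℕ) : (Fin (2*(m+1)) → ZMod 2) →ₗ[ZMod 2] (ZMod 2 × ZMod 2) :=
  (LinearMap.proj (⟨m, by omega⟩ : Fin (2*(m+1)))).prod (LinearMap.proj ⟨2*m+1, by omega⟩)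

def jL (m : ℕ) : (Fin (2*m) → ZMod 2) →ₗ[ZMod 2] (Fin (2*(m+1)) → ZMod 2) :=
  LinearMap.pi fun i : Fin (2*(m+1)) =>
    if _ : (i : ℕ) < m then LinearMap.proj ⟨i.1, by have := i.2; omega⟩
    else if _ : (i : ℕ) = m ∨ (i : ℕ) = 2*m+1 then 0
    else LinearMap.proj ⟨i.1-1, by have := i.2; omega⟩

lemma p0L_apply (m : ℕ) (w : Fin (2*(m+1)) → ZMod 2) : proj0 (m+1) w = p0L m w := by
  funext i
  simp only [proj0, p0L, LinearMap.funLeft_apply, Nat.add_sub_cancel]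
  by_cases h : (i : ℕ) < m <;> simp [h]

lemma p1L_apply (m : ℕ) (w : Fin (2*(m+1)) → ZMod 2) : proj1 (m+1) w = p1L m w := by
  simp only [proj1, p1L, dif_pos (Nat.succ_pos m), Nat.add_sub_cancel, LinearMap.prod_apply,
    LinearMap.proj_apply, Pi.prod]
  refine Prod.ext rfl ?_
  show w _ = w _
  exact congrArg w (Fin.ext (by simp; omega))

lemma p0L_jL (m : ℕ) (z : Fin (2*m) → ZMod 2) : p0L m (jL m z) = z := by
  funext i
  simp only [p0L, jL, LinearMap.funLeft_apply, LinearMap.pi_apply]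
  by_cases h : (i : ℕ) < m
  · simp [h]
  · have h1 : ¬ ((i:ℕ)+1 < m) := by omega
    have h2 : ¬ ((i:ℕ)+1 = m ∨ (i:ℕ)+1 = 2*m+1) := by have := i.2; omega
    have h2' : ¬ ((i:ℕ)+1 = m ∨ (i:ℕ) = 2*m) := by have := i.2; omega
    simp [h, h1, h2, h2']

lemma jL_p0L (m : ℕ) (w : Fin (2*(m+1)) → ZMod 2) (hw : p1L m w = 0) :
    jL m (p0L m w) = w := by
  have ha : w ⟨m, by omega⟩ = 0 := congrArg Prod.fst hw
  have hb : w ⟨2*m+1, by omega⟩ = 0 := congrArg Prod.snd hw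
  funext i
  simp only [jL, p0L, LinearMap.pi_apply, LinearMap.funLeft_apply]
  by_cases h : (i : ℕ) < m
  · simp [h]
  · by_cases h2 : (i:ℕ) = m ∨ (i:ℕ) = 2*m+1
    · rw [dif_neg h, dif_pos h2]
      rcases h2 with h2 | h2
      · rw [LinearMap.zero_apply, show i = ⟨m, by omega⟩ from Fin.ext h2, ha]
      · rw [LinearMap.zero_apply, show i = ⟨2*m+1, by omega⟩ from Fin.ext h2, hb]
    · rw [dif_neg h, dif_neg h2]
      have h3 : ¬ ((i:ℕ)-1 < m) := by omega
      simp only [LinearMap.proj_apply, p0L, LinearMap.funLeft_apply]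
      rw [dif_neg h3]
      exact congrArg w (Fin.ext (show ((i:ℕ)-1)+1 = (i:ℕ) by omega))

lemma proj_inj (m : ℕ) (w w' : Fin (2*(m+1)) → ZMod 2)
    (h0 : proj0 (m+1) w = proj0 (m+1) w') (h1 : proj1 (m+1) w = proj1 (m+1) w') : w = w' := by
  have h0' : p0L m (w - w') = 0 := by
    rw [map_sub, ← p0L_apply, ← p0L_apply, h0, sub_self]
  have h1' : p1L m (w - w') = 0 := by
    rw [map_sub, ← p1L_apply, ← p1L_apply, h1, sub_self]
  have h := jL_p0L m (w - w') h1'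
  rw [h0', map_zero] at h
  exact sub_eq_zero.mp h.symm

lemma qForm_split (m : ℕ) (w : Fin (2*(m+1)) → ZMod 2) :
    qForm (m+1) w = qForm m (proj0 (m+1) w) + (proj1 (m+1) w).1 * (proj1 (m+1) w).2 := by
  simp only [qForm, proj1, dif_pos (Nat.succ_pos m), Nat.add_sub_cancel]
  rw [Fin.sum_univ_castSucc]
  congr 1
  · refine Finset.sum_congr rfl fun i _ => ?_
    have h1 : ((i.castSucc : Fin (m+1)) : ℕ) = (i : ℕ) := rfl
    have hi : ((i : ℕ) : ℕ) < m := i.2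
    have hlt : (i : ℕ) < (m+1) - 1 := by omega
    have hnlt : ¬ ((m + (i:ℕ)) < (m+1) - 1) := by omega
    simp only [proj0, h1, dif_pos hlt, dif_neg hnlt]
    rw [show (⟨m + 1 + (i:ℕ), by have := i.2; omega⟩ : Fin (2*(m+1))) = ⟨m + (i:ℕ) + 1, by have := i.2; omega⟩ from Fin.ext (by simp; omega)]
  · rw [show (⟨m + 1 + ((Fin.last m : Fin (m+1)):ℕ), by omega⟩ : Fin (2*(m+1))) = ⟨2*(m+1)-1, by omega⟩ from Fin.ext (by simp [Fin.last]; omega)]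
    rw [show (⟨((Fin.last m : Fin (m+1)):ℕ), by omega⟩ : Fin (2*(m+1))) = ⟨m, by omega⟩ from Fin.ext (by simp [Fin.last])]

lemma struct_lemma (m : ℕ) (A : Set (Fin (2*(m+1)) → ZMod 2))
    (A' : ZMod 2 × ZMod 2 → Set (Fin (2*m) → ZMod 2))
    (hA' : ∀ σ, A' σ = proj0 (m+1) '' (A ∩ {w | proj1 (m+1) w = σ}))
    (c : ZMod 2) (T T' : Set (Fin (2*m) → ZMod 2))
    (hT : T = {z | qForm m z = c + 1}) (hT' : T' = {z | qForm m z = c}) :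
    A ∩ {w | qForm (m+1) w = c} = ⋃ σ ∈ proj1 (m+1) '' A,
      tensorSuffix (m+1) (A' σ ∩ (if σ = ((1:ZMod 2),(1:ZMod 2)) then T else T')) σ := by
  ext w
  simp only [Set.mem_inter_iff, Set.mem_setOf_eq, Set.mem_iUnion, exists_prop]
  constructor
  · rintro ⟨hwA, hq⟩
    refine ⟨proj1 (m+1) w, ⟨w, hwA, rfl⟩, ⟨⟨?_, ?_⟩, rfl⟩⟩
    · rw [hA']; exact ⟨w, ⟨hwA, rfl⟩, rfl⟩
    · rw [qForm_split] at hq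
      by_cases hσ : proj1 (m+1) w = ((1:ZMod 2), (1:ZMod 2))
      · rw [if_pos hσ, hT]
        rw [hσ] at hq
        have h2 : ∀ x c : ZMod 2, x + (1:ZMod 2) * 1 = c → x = c + 1 := by decide
        exact h2 _ _ hq
      · rw [if_neg hσ, hT']
        have hz : (proj1 (m+1) w).1 * (proj1 (m+1) w).2 = 0 := by
          have h3 : ∀ σ : ZMod 2 × ZMod 2, σ ≠ ((1:ZMod 2),(1:ZMod 2)) → σ.1 * σ.2 = 0 := by decide
          exact h3 _ hσ
        rw [hz, add_zero] at hq
        exact hq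
  · rintro ⟨σ, ⟨w₀, hw₀A, hw₀σ⟩, ⟨hX1, hX2⟩, hpσ⟩
    rw [hA'] at hX1
    obtain ⟨w', ⟨hw'A, hw'σ⟩, hw'0⟩ := hX1
    have hww : w = w' := proj_inj m w w' hw'0.symm (hpσ.trans hw'σ.symm)
    refine ⟨hww ▸ hw'A, ?_⟩
    rw [qForm_split, hpσ]
    by_cases hσ : σ = ((1:ZMod 2), (1:ZMod 2))
    · rw [if_pos hσ, hT] at hX2
      rw [hσ]
      have h2 : ∀ x c : ZMod 2, x = c + 1 → x + (1:ZMod 2) * 1 = c := by decide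
      exact h2 _ _ hX2
    · rw [if_neg hσ, hT'] at hX2
      have hz : σ.1 * σ.2 = 0 := by
        have h3 : ∀ σ : ZMod 2 × ZMod 2, σ ≠ ((1:ZMod 2),(1:ZMod 2)) → σ.1 * σ.2 = 0 := by decide
        exact h3 _ hσ
      rw [hz, add_zero]
      exact hX2

theorem stmt_4 (k d : ℕ) (hk : 1 < k) (hd : k ≤ d)
    (A : Set (Fin (2 * k) → ZMod 2))
    (hA : ∃ (a : Fin (2 * k) → ZMod 2)
        (W : Submodule (ZMod 2) (Fin (2 * k) → ZMod 2)),
        Module.finrank (ZMod 2) W = d ∧ A = (a + ·) '' (W : Set _)) :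
    ∃ (σ₀ : ZMod 2 × ZMod 2) (WF : Submodule (ZMod 2) (ZMod 2 × ZMod 2))
      (W' : Submodule (ZMod 2) (Fin (2 * (k - 1)) → ZMod 2))
      (A' : ZMod 2 × ZMod 2 → Set (Fin (2 * (k - 1)) → ZMod 2)),
      -- `F := π₁(A)` is an affine subspace of `𝔽₂²`
      proj1 k '' A = (σ₀ + ·) '' (WF : Set (ZMod 2 × ZMod 2)) ∧
      -- `dim W' = d - dim F`
      Module.finrank (ZMod 2) W' + Module.finrank (ZMod 2) WF = d ∧
      -- each `A'_σ ⊆ π₀(A)` is a translate of the same linear subspace `W'`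
      (∀ σ ∈ proj1 k '' A,
        A' σ ⊆ proj0 k '' A ∧ ∃ u, A' σ = (u + ·) '' (W' : Set _)) ∧
      -- structure formula for `A ∩ R_k`
      A ∩ Rset k = ⋃ σ ∈ proj1 k '' A,
        tensorSuffix k
          (A' σ ∩ (if σ = ((1 : ZMod 2), (1 : ZMod 2)) then Sset (k - 1) else Rset (k - 1))) σ ∧
      -- structure formula for `A ∩ S_k`
      A ∩ Sset k = ⋃ σ ∈ proj1 k '' A,
        tensorSuffix k
          (A' σ ∩ (if σ = ((1 : ZMod 2), (1 : ZMod 2)) then Rset (k - 1) else Sset (k - 1))) σ ∧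
      -- the unions are disjoint
      (proj1 k '' A).PairwiseDisjoint (fun σ =>
        tensorSuffix k
          (A' σ ∩ (if σ = ((1 : ZMod 2), (1 : ZMod 2)) then Sset (k - 1) else Rset (k - 1))) σ) ∧
      (proj1 k '' A).PairwiseDisjoint (fun σ =>
        tensorSuffix k
          (A' σ ∩ (if σ = ((1 : ZMod 2), (1 : ZMod 2)) then Rset (k - 1) else Sset (k - 1))) σ) := by
  obtain ⟨m, rfl⟩ : ∃ m, k = m + 1 := ⟨k - 1, by omega⟩
  obtain ⟨a, W, hdim, hAeq⟩ := hA
  set U : Submodule (ZMod 2) (Fin (2*(m+1)) → ZMod 2) := W ⊓ LinearMap.ker (p1L m) with hU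
  refine ⟨p1L m a, W.map (p1L m), U.map (p0L m),
    fun σ => proj0 (m+1) '' (A ∩ {w | proj1 (m+1) w = σ}), ?_, ?_, ?_, ?_, ?_, ?_, ?_⟩
  · -- image of A under proj1 is an affine subspace
    rw [hAeq, ← Set.image_comp, Submodule.map_coe, ← Set.image_comp]
    refine Set.image_congr' fun w => ?_
    show proj1 (m+1) (a + w) = p1L m a + p1L m w
    rw [p1L_apply m, map_add]
  · -- dimension count
    have e1 : Module.finrank (ZMod 2) (U.map (p0L m)) = Module.finrank (ZMod 2) U := by
      refine le_antisymm (Submodule.finrank_map_le _ _) ?_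
      have hmm : (U.map (p0L m)).map (jL m) = U := by
        ext x
        simp only [Submodule.mem_map]
        constructor
        · rintro ⟨z, ⟨y, hy, rfl⟩, rfl⟩
          rwa [jL_p0L m y (LinearMap.mem_ker.mp hy.2)]
        · intro hx
          exact ⟨p0L m x, ⟨x, hx, rfl⟩, jL_p0L m x (LinearMap.mem_ker.mp hx.2)⟩
      calc Module.finrank (ZMod 2) U = Module.finrank (ZMod 2) ((U.map (p0L m)).map (jL m)) := by
            rw [hmm]
        _ ≤ Module.finrank (ZMod 2) (U.map (p0L m)) := Submodule.finrank_map_le _ _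
    have e2 := LinearMap.finrank_range_add_finrank_ker ((p1L m).comp W.subtype)
    rw [LinearMap.range_comp, Submodule.range_subtype, LinearMap.ker_comp] at e2
    have e3 : Module.finrank (ZMod 2) (Submodule.comap W.subtype (LinearMap.ker (p1L m)))
        = Module.finrank (ZMod 2) U := by
      rw [← Submodule.finrank_map_subtype_eq W, Submodule.map_comap_subtype]
    rw [e3, hdim] at e2
    show Module.finrank (ZMod 2) (U.map (p0L m)) + Module.finrank (ZMod 2) (W.map (p1L m)) = d
    rw [e1]
    omega
  · -- each A' σ is a translate of W'
    rintro σ ⟨w₀, hw₀A, rfl⟩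
    constructor
    · exact Set.image_mono Set.inter_subset_left
    · refine ⟨proj0 (m+1) w₀, ?_⟩
      ext s
      constructor
      · rintro ⟨w, ⟨hwA, hwσ⟩, rfl⟩
        have htW : w - w₀ ∈ W := by
          rw [hAeq] at hwA hw₀A
          obtain ⟨v, hv, rfl⟩ := hwA
          obtain ⟨v₀, hv₀, rfl⟩ := hw₀A
          have : a + v - (a + v₀) = v - v₀ := by abel
          rw [this]
          exact sub_mem hv hv₀
        have hwσ' : proj1 (m+1) w = proj1 (m+1) w₀ := hwσ
        have htK : w - w₀ ∈ LinearMap.ker (p1L m) := by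
          rw [LinearMap.mem_ker, map_sub, ← p1L_apply, ← p1L_apply, hwσ', sub_self]
        refine ⟨p0L m (w - w₀), ⟨w - w₀, ⟨htW, htK⟩, rfl⟩, ?_⟩
        beta_reduce
        rw [p0L_apply m w₀, p0L_apply m w]
        have h9 : p0L m w₀ + p0L m (w - w₀) = p0L m w := by
          rw [← map_add]; congr 1; abel
        exact h9
      · rintro ⟨s', ⟨t, ht, rfl⟩, rfl⟩
        refine ⟨w₀ + t, ⟨?_, ?_⟩, ?_⟩
        · rw [hAeq] at hw₀A ⊢
          obtain ⟨v₀, hv₀, rfl⟩ := hw₀A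
          exact ⟨v₀ + t, add_mem hv₀ ht.1, by show a + (v₀ + t) = a + v₀ + t; abel⟩
        · show proj1 (m+1) (w₀ + t) = proj1 (m+1) w₀
          rw [p1L_apply m (w₀ + t), p1L_apply m w₀, map_add, LinearMap.mem_ker.mp ht.2, add_zero]
        · beta_reduce
          rw [p0L_apply m (w₀ + t), p0L_apply m w₀]
          have h9 : p0L m (w₀ + t) = p0L m w₀ + p0L m t := map_add _ _ _
          exact h9
  · -- structure of A ∩ R
    exact struct_lemma m A _ (fun σ => rfl) 0 (Sset m) (Rset m)
      (by simp [Sset]) (by simp [Rset])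
  · -- structure of A ∩ S
    exact struct_lemma m A _ (fun σ => rfl) 1 (Rset m) (Sset m)
      (by have : (1 : ZMod 2) + 1 = 0 := by decide
          simp [Rset, this]) (by simp [Sset])
  · -- disjointness (R)
    intro σ hσ τ hτ hne
    rw [Function.onFun, Set.disjoint_left]
    rintro w ⟨_, h1⟩ ⟨_, h2⟩
    exact hne (h1.symm.trans h2)
  · -- disjointness (S)
    intro σ hσ τ hτ hne
    rw [Function.onFun, Set.disjoint_left]
    rintro w ⟨_, h1⟩ ⟨_, h2⟩
    exact hne (h1.symm.trans h2)
end

section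
/- Let k be a positive integer, a₁, a₂ ∈ 𝔽₂^{2k}, and W a linear subspace of 𝔽₂^{2k}. For the affine subspaces A₁ = a₁ + W and A₂ = a₂ + W there exist two sets B₁ and B₂, each of which is either empty or an affine subspace of 𝔽₂^{2k}, such that |A₁ ∩ R_k| + |A₂ ∩ S_k| = |B₁| + 2·|B₂ ∩ S_k| and |B₁| + |B₂| = |W|. -/
/-- `A` is an affine subspace: a translate `a + W` of a linear subspace `W`. -/
def IsAffineSubspace {V : Type*} [AddCommGroup V] [Module (ZMod 2) V]
    (A : Set V) : Prop :=
  ∃ (a : V) (W : Submodule (ZMod 2) V), A = (a + ·) '' (W : Set V)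

lemma zmod2_id : ∀ a b c a' b' c' : ZMod 2,
    (a+b+c)*(a'+b'+c') + (a+b)*(a'+b') + ((a+c)*(a'+c') + a*a')
      = (b+c)*(b'+c') + (b*b' + c*c') := by decide

lemma qForm_key (k : ℕ) (x w d : Fin (2*k) → ZMod 2) :
    qForm k (x+w+d) + qForm k (x+w) + (qForm k (x+d) + qForm k x)
      = qForm k (w+d) + (qForm k w + qForm k d) := by
  unfold qForm
  rw [← Finset.sum_add_distrib, ← Finset.sum_add_distrib, ← Finset.sum_add_distrib,
    ← Finset.sum_add_distrib, ← Finset.sum_add_distrib]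
  refine Finset.sum_congr rfl fun i _ => ?_
  simp only [Pi.add_apply]
  exact zmod2_id _ _ _ _ _ _

lemma qForm_zero (k : ℕ) : qForm k 0 = 0 := by simp [qForm]

/-- The polarization `B(w,d) = q(w+d) + q(w) + q(d)`. -/
def bphi (k : ℕ) (d w : Fin (2*k) → ZMod 2) : ZMod 2 :=
  qForm k (w + d) + (qForm k w + qForm k d)

lemma bphi_key (k : ℕ) (x w d : Fin (2*k) → ZMod 2) :
    qForm k (x+w+d) + qForm k (x+w) = bphi k d w + (qForm k (x+d) + qForm k x) := by
  have h := qForm_key k x w d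
  unfold bphi
  revert h
  generalize qForm k (x+w+d) = A
  generalize qForm k (x+w) = B
  generalize qForm k (x+d) = C
  generalize qForm k x = D
  generalize qForm k (w+d) = E
  generalize qForm k w = F
  generalize qForm k d = G
  revert A B C D E F G; decide

lemma bphi_zero (k : ℕ) (d : Fin (2*k) → ZMod 2) : bphi k d 0 = 0 := by
  unfold bphi
  rw [zero_add, qForm_zero]
  generalize qForm k d = G
  revert G; decide

lemma bphi_add (k : ℕ) (d w w' : Fin (2*k) → ZMod 2) :
    bphi k d (w + w') = bphi k d w + bphi k d w' := by
  have h := bphi_key k w w' d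
  unfold bphi at h ⊢
  revert h
  generalize qForm k (w+w'+d) = A
  generalize qForm k (w+w') = B
  generalize qForm k (w+d) = C
  generalize qForm k w = D
  generalize qForm k (w'+d) = E
  generalize qForm k w' = F
  generalize qForm k d = G
  revert A B C D E F G; decide

theorem stmt_5 (k : ℕ) (hk : 0 < k) (a₁ a₂ : Fin (2 * k) → ZMod 2)
    (W : Submodule (ZMod 2) (Fin (2 * k) → ZMod 2)) :
    ∃ B₁ B₂ : Set (Fin (2 * k) → ZMod 2),
      (B₁ = ∅ ∨ IsAffineSubspace B₁) ∧
      (B₂ = ∅ ∨ IsAffineSubspace B₂) ∧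
      ((a₁ + ·) '' (W : Set _) ∩ Rset k).ncard
          + ((a₂ + ·) '' (W : Set _) ∩ Sset k).ncard
        = B₁.ncard + 2 * (B₂ ∩ Sset k).ncard ∧
      B₁.ncard + B₂.ncard = (W : Set (Fin (2 * k) → ZMod 2)).ncard := by
  classical
  set d : Fin (2*k) → ZMod 2 := a₂ - a₁ with hd
  -- the subgroup W₀ = {w ∈ W | bphi k d w = 0}
  set W₀ : Submodule (ZMod 2) (Fin (2*k) → ZMod 2) :=
    { carrier := {w | w ∈ W ∧ bphi k d w = 0}
      add_mem' := by
        rintro a b ⟨haW, haφ⟩ ⟨hbW, hbφ⟩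
        refine ⟨W.add_mem haW hbW, ?_⟩
        rw [bphi_add k d a b, haφ, hbφ, add_zero]
      zero_mem' := ⟨W.zero_mem, bphi_zero k d⟩
      smul_mem' := by
        intro c x hx
        rcases (by decide : ∀ c : ZMod 2, c = 0 ∨ c = 1) c with rfl | rfl
        · simp only [zero_smul, Set.mem_setOf_eq]
          exact ⟨W.zero_mem, bphi_zero k d⟩
        · simpa using hx } with hW₀
  set A₁ : Set (Fin (2*k) → ZMod 2) := (a₁ + ·) '' (W : Set _) with hA₁
  set A₂ : Set (Fin (2*k) → ZMod 2) := (a₂ + ·) '' (W : Set _) with hA₂def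
  set E : ZMod 2 → Set (Fin (2*k) → ZMod 2) :=
    fun ε => A₁ ∩ {x | qForm k (x + d) + qForm k x = ε} with hE
  -- coset structure of E ε
  have hcoset : ∀ (ε : ZMod 2) (t₀ : Fin (2*k) → ZMod 2),
      t₀ ∈ E ε → E ε = (t₀ + ·) '' (W₀ : Set _) := by
    intro ε t₀ ht₀
    obtain ⟨⟨w₁, hw₁, rfl⟩, ht₀ε⟩ := ht₀
    simp only [Set.mem_setOf_eq] at ht₀ε
    ext x
    constructor
    · rintro ⟨⟨wx, hwx, rfl⟩, hxε⟩
      simp only [Set.mem_setOf_eq] at hxε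
      refine ⟨wx - w₁, ⟨W.sub_mem hwx hw₁, ?_⟩, by show a₁ + w₁ + (wx - w₁) = a₁ + wx; abel⟩
      have h := bphi_key k (a₁ + w₁) (wx - w₁) d
      rw [show a₁ + w₁ + (wx - w₁) = a₁ + wx from by abel] at h
      rw [hxε, ht₀ε] at h
      exact (by decide : ∀ ε c : ZMod 2, ε = c + ε → c = 0) ε _ h
    · rintro ⟨w, ⟨hwW, hwφ⟩, rfl⟩
      refine ⟨⟨w₁ + w, W.add_mem hw₁ hwW, by show a₁ + (w₁ + w) = a₁ + w₁ + w; abel⟩, ?_⟩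
      simp only [Set.mem_setOf_eq]
      have h := bphi_key k (a₁ + w₁) w d
      rw [hwφ, ht₀ε, zero_add] at h
      exact h
  -- B₁ and B₂
  set B₁ : Set (Fin (2*k) → ZMod 2) := E 0 with hB₁
  set B₂ : Set (Fin (2*k) → ZMod 2) := (· + d) '' (E 1) with hB₂
  have hinj : Function.Injective (fun x : Fin (2*k) → ZMod 2 => x + d) := fun x y h => by
    simpa using congrArg (fun z => z - d) h
  have hainj : ∀ a : Fin (2*k) → ZMod 2, Function.Injective (a + ·) := fun a x y h => by
    simpa using congrArg (fun z => z - a) h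
  -- counting facts
  have f1 : Disjoint (E 1) (E 0) := by
    rw [Set.disjoint_left]
    rintro x ⟨-, hx1⟩ ⟨-, hx0⟩
    simp only [Set.mem_setOf_eq] at hx1 hx0
    rw [hx1] at hx0
    exact one_ne_zero hx0
  have f2 : E 1 ∪ E 0 = A₁ := by
    ext x
    simp only [hE, Set.mem_union, Set.mem_inter_iff, Set.mem_setOf_eq]
    constructor
    · rintro (⟨h, -⟩ | ⟨h, -⟩) <;> exact h
    · intro h
      rcases (by decide : ∀ c : ZMod 2, c = 1 ∨ c = 0) (qForm k (x + d) + qForm k x) with h1 | h1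
      · exact Or.inl ⟨h, h1⟩
      · exact Or.inr ⟨h, h1⟩
  have f4 : A₂ = (· + d) '' A₁ := by
    ext x
    simp only [hA₂def, hA₁, Set.mem_image, exists_exists_and_eq_and]
    constructor
    · rintro ⟨w, hw, rfl⟩
      exact ⟨w, hw, by show a₁ + w + d = a₂ + w; rw [hd]; abel⟩
    · rintro ⟨w, hw, rfl⟩
      exact ⟨w, hw, by show a₂ + w = a₁ + w + d; rw [hd]; abel⟩
  have fRS : ∀ y : Fin (2*k) → ZMod 2, y ∈ E 1 ∩ Rset k ∪ E 0 ∩ Sset k ↔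
      (y ∈ A₁ ∧ qForm k (y + d) = 1) := by
    intro y
    simp only [Set.mem_union, Set.mem_inter_iff, hE, Set.mem_setOf_eq, Rset, Sset]
    constructor
    · rintro (⟨⟨hA, h1⟩, h2⟩ | ⟨⟨hA, h1⟩, h2⟩)
      · refine ⟨hA, ?_⟩
        rw [h2] at h1
        revert h1; generalize qForm k (y+d) = c; revert c; decide
      · refine ⟨hA, ?_⟩
        rw [h2] at h1
        revert h1; generalize qForm k (y+d) = c; revert c; decide
    · rintro ⟨hA, h1⟩
      rcases (by decide : ∀ c : ZMod 2, c = 0 ∨ c = 1) (qForm k y) with h2 | h2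
      · exact Or.inl ⟨⟨hA, by rw [h1, h2]; decide⟩, h2⟩
      · exact Or.inr ⟨⟨hA, by rw [h1, h2]; decide⟩, h2⟩
  have f5 : A₂ ∩ Sset k = (· + d) '' (E 1 ∩ Rset k ∪ E 0 ∩ Sset k) := by
    rw [f4]
    ext x
    constructor
    · rintro ⟨⟨y, hyA, rfl⟩, hxS⟩
      exact ⟨y, (fRS y).2 ⟨hyA, hxS⟩, rfl⟩
    · rintro ⟨y, hy, rfl⟩
      obtain ⟨hyA, h1⟩ := (fRS y).1 hy
      exact ⟨⟨y, hyA, rfl⟩, h1⟩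
  have f6 : B₂ ∩ Sset k = (· + d) '' (E 1 ∩ Rset k) := by
    rw [hB₂]
    ext x
    constructor
    · rintro ⟨⟨y, hy1, rfl⟩, hxS⟩
      refine ⟨y, ⟨hy1, ?_⟩, rfl⟩
      have h1 := hy1.2
      simp only [Set.mem_setOf_eq] at h1
      simp only [Sset, Set.mem_setOf_eq] at hxS
      rw [hxS] at h1
      simp only [Rset, Set.mem_setOf_eq]
      revert h1; generalize qForm k y = c; revert c; decide
    · rintro ⟨y, ⟨hy1, hyR⟩, rfl⟩
      refine ⟨⟨y, hy1, rfl⟩, ?_⟩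
      have h1 := hy1.2
      simp only [Set.mem_setOf_eq] at h1
      simp only [Rset, Set.mem_setOf_eq] at hyR
      rw [hyR] at h1
      simp only [Sset, Set.mem_setOf_eq]
      revert h1; generalize qForm k (y + d) = c; revert c; decide
  have f7 : E 0 = E 0 ∩ Rset k ∪ E 0 ∩ Sset k := by
    ext x
    simp only [Set.mem_union, Set.mem_inter_iff, Rset, Sset, Set.mem_setOf_eq]
    constructor
    · intro h
      rcases (by decide : ∀ c : ZMod 2, c = 0 ∨ c = 1) (qForm k x) with h1 | h1
      · exact Or.inl ⟨h, h1⟩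
      · exact Or.inr ⟨h, h1⟩
    · rintro (⟨h, -⟩ | ⟨h, -⟩) <;> exact h
  have dRS : ∀ s t : Set (Fin (2*k) → ZMod 2), Disjoint (s ∩ Rset k) (t ∩ Sset k) := by
    intro s t
    rw [Set.disjoint_left]
    rintro x ⟨-, hR⟩ ⟨-, hS⟩
    simp only [Rset, Sset, Set.mem_setOf_eq] at hR hS
    rw [hR] at hS
    exact zero_ne_one hS
  -- ncard computations
  have n1 : (A₁ ∩ Rset k).ncard = (E 1 ∩ Rset k).ncard + (E 0 ∩ Rset k).ncard := by
    rw [← f2, Set.union_inter_distrib_right]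
    exact Set.ncard_union_eq (f1.mono Set.inter_subset_left Set.inter_subset_left)
      (Set.toFinite _) (Set.toFinite _)
  have n2 : (A₂ ∩ Sset k).ncard = (E 1 ∩ Rset k).ncard + (E 0 ∩ Sset k).ncard := by
    rw [f5, Set.ncard_image_of_injective _ hinj]
    exact Set.ncard_union_eq (dRS _ _) (Set.toFinite _) (Set.toFinite _)
  have n3 : (B₂ ∩ Sset k).ncard = (E 1 ∩ Rset k).ncard := by
    rw [f6, Set.ncard_image_of_injective _ hinj]
  have n4 : B₁.ncard = (E 0 ∩ Rset k).ncard + (E 0 ∩ Sset k).ncard := by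
    rw [hB₁]
    conv_lhs => rw [f7]
    exact Set.ncard_union_eq (dRS _ _) (Set.toFinite _) (Set.toFinite _)
  have n5 : B₂.ncard = (E 1).ncard := by
    rw [hB₂, Set.ncard_image_of_injective _ hinj]
  have n6 : (E 1).ncard + (E 0).ncard = A₁.ncard := by
    rw [← f2]
    exact (Set.ncard_union_eq f1 (Set.toFinite _) (Set.toFinite _)).symm
  have n7 : A₁.ncard = (W : Set (Fin (2*k) → ZMod 2)).ncard := by
    rw [hA₁, Set.ncard_image_of_injective _ (hainj a₁)]
  have n8 : B₁.ncard = (E 0).ncard := by rw [hB₁]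
  refine ⟨B₁, B₂, ?_, ?_, ?_, ?_⟩
  · rcases Set.eq_empty_or_nonempty B₁ with h | ⟨t₀, ht₀⟩
    · exact Or.inl h
    · exact Or.inr ⟨t₀, W₀, hcoset 0 t₀ ht₀⟩
  · rcases Set.eq_empty_or_nonempty (E 1) with h | ⟨t₁, ht₁⟩
    · left; rw [hB₂, h]; simp
    · right
      refine ⟨t₁ + d, W₀, ?_⟩
      rw [hB₂, hcoset 1 t₁ ht₁, ← Set.image_comp]
      have : ((fun x => x + d) ∘ fun x => t₁ + x) = fun x => t₁ + d + x := by
        funext y; simp only [Function.comp_apply]; abel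
      rw [this]
  · omega
  · omega
end
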